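/- arXiv:1810.12998 — 3 statements merged into one kernel-verified Lean document; each statement's English description precedes it below -/
import Mathlib

section
/- Let k be a positive integer. For every S(2k-1)-space X, the pseudocharacter satisfies ψ(X) ≤ 2^{s_{2k-1}(X)}. -/
open Cardinal Set

universe u

variable {X : Type u}

/-- `x` is S(n)-separated from `A`. -/
def SSep [TopologicalSpace X] : ℕ → X → Set X → Prop
  | 0, x, A => x ∉ closure A
  | (n+1), x, A => ∃ U : ℕ → Set X, (∀ i ≤ n, IsOpen (U i)) ∧ x ∈ U 0 ∧
      (∀ i < n, closure (U i) ⊆ U (i+1)) ∧ closure (U n) ∩ A = ∅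

/-- `X` is an S(n)-space. -/
def SSpace (n : ℕ) (X : Type u) [TopologicalSpace X] : Prop :=
  ∀ x y : X, x ≠ y → SSep n x {y}

/-- `U` is an S(2k-1)-neighborhood of `x` (for `k ≥ 1`). -/
def SOddNhd [TopologicalSpace X] (k : ℕ) (x : X) (U : Set X) : Prop :=
  ∃ V : ℕ → Set X, (∀ i < k, IsOpen (V i)) ∧ x ∈ V 0 ∧
    (∀ i, i + 1 < k → closure (V i) ⊆ V (i+1)) ∧ V (k-1) ⊆ U

/-- `U` is an S(2k)-neighborhood of `x` (for `k ≥ 1`). -/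
def SEvenNhd [TopologicalSpace X] (k : ℕ) (x : X) (U : Set X) : Prop :=
  ∃ V : ℕ → Set X, (∀ i < k, IsOpen (V i)) ∧ x ∈ V 0 ∧
    (∀ i, i + 1 < k → closure (V i) ⊆ V (i+1)) ∧ closure (V (k-1)) ⊆ U

/-- `U` is an open S(2k-1)-neighborhood of `x`. -/
def SOpenNhd [TopologicalSpace X] (k : ℕ) (x : X) (U : Set X) : Prop :=
  IsOpen U ∧ SOddNhd k x U

/-- `U` is an S(2k-1)-open set. -/
def SOpen [TopologicalSpace X] (k : ℕ) (U : Set X) : Prop :=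
  IsOpen U ∧ ∃ x, SOddNhd k x U

/-- The S(2k-1)-closure `θ_{2k-1}(A)`. -/
def thetaOdd [TopologicalSpace X] (k : ℕ) (A : Set X) : Set X :=
  {x | ∀ U : Set X, SOpenNhd k x U → (U ∩ A).Nonempty}

/-- The S(2k)-closure `θ_{2k}(A)`. -/
def thetaEven [TopologicalSpace X] (k : ℕ) (A : Set X) : Set X :=
  {x | ∀ U : Set X, SOpenNhd k x U → (closure U ∩ A).Nonempty}

/-- `D` is S(2k-1)-discrete. -/
def SOddDiscrete [TopologicalSpace X] (k : ℕ) (D : Set X) : Prop :=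
  ∀ x ∈ D, ∃ U : Set X, SOpenNhd k x U ∧ U ∩ D = {x}

/-- `D` is S(2k)-discrete. -/
def SEvenDiscrete [TopologicalSpace X] (k : ℕ) (D : Set X) : Prop :=
  ∀ x ∈ D, ∃ U : Set X, SOpenNhd k x U ∧ closure U ∩ D = {x}

/-- The S(2k-1)-spread `s_{2k-1}(X)`. -/
noncomputable def spreadOdd (k : ℕ) (X : Type u) [TopologicalSpace X] : Cardinal :=
  (⨆ D : {D : Set X // SOddDiscrete k D}, #D.1) ⊔ Cardinal.aleph0

/-- The S(2k)-spread `s_{2k}(X)`. -/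
noncomputable def spreadEven (k : ℕ) (X : Type u) [TopologicalSpace X] : Cardinal :=
  (⨆ D : {D : Set X // SEvenDiscrete k D}, #D.1) ⊔ Cardinal.aleph0

/-- The S(2k-1)-cellularity `c_{2k-1}(X)`. -/
noncomputable def cellOdd (k : ℕ) (X : Type u) [TopologicalSpace X] : Cardinal :=
  (⨆ F : {F : Set (Set X) // (∀ U ∈ F, SOpen k U ∧ U.Nonempty) ∧
      (∀ U ∈ F, ∀ V ∈ F, U ≠ V → U ∩ V = ∅)}, #F.1) ⊔ Cardinal.aleph0

/-- The S(2k)-cellularity `c_{2k}(X)`. -/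
noncomputable def cellEven (k : ℕ) (X : Type u) [TopologicalSpace X] : Cardinal :=
  (⨆ F : {F : Set (Set X) // (∀ U ∈ F, SOpen k U ∧ U.Nonempty) ∧
      (∀ U ∈ F, ∀ V ∈ F, U ≠ V → closure U ∩ closure V = ∅)}, #F.1) ⊔ Cardinal.aleph0

/-- The S(2k-1)-character `χ_{2k-1}(X)`. -/
noncomputable def charOdd (k : ℕ) (X : Type u) [TopologicalSpace X] : Cardinal :=
  sInf {c | Cardinal.aleph0 ≤ c ∧ ∀ x : X, ∃ B : Set (Set X), #B ≤ c ∧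
    (∀ U ∈ B, SOpenNhd k x U) ∧
    ∀ U : Set X, SOpenNhd k x U → ∃ V ∈ B, V ⊆ U}

/-- The S(2k)-character `χ_{2k}(X)`. -/
noncomputable def charEven (k : ℕ) (X : Type u) [TopologicalSpace X] : Cardinal :=
  sInf {c | Cardinal.aleph0 ≤ c ∧ ∀ x : X, ∃ B : Set (Set X), #B ≤ c ∧
    (∀ V ∈ B, IsClosed V ∧ SOddNhd k x V) ∧
    ∀ W : Set X, SOpenNhd k x W → ∃ V ∈ B, V ⊆ closure W}

/-- The S(2k-1)-pseudocharacter `ψ_{2k-1}(X)`. -/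
noncomputable def psiOdd (k : ℕ) (X : Type u) [TopologicalSpace X] : Cardinal :=
  sInf {c | Cardinal.aleph0 ≤ c ∧ ∀ x : X, ∃ B : Set (Set X), #B ≤ c ∧
    (∀ U ∈ B, SOpenNhd k x U) ∧ ⋂₀ B = {x}}

/-- The S(2k)-pseudocharacter `ψ_{2k}(X)`. -/
noncomputable def psiEven (k : ℕ) (X : Type u) [TopologicalSpace X] : Cardinal :=
  sInf {c | Cardinal.aleph0 ≤ c ∧ ∀ x : X, ∃ B : Set (Set X), #B ≤ c ∧
    (∀ U ∈ B, SOpenNhd k x U) ∧ (⋂ U ∈ B, closure U) = {x}}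

/-- The usual pseudocharacter `ψ(X)`. -/
noncomputable def psi (X : Type u) [TopologicalSpace X] : Cardinal :=
  sInf {c | Cardinal.aleph0 ≤ c ∧ ∀ x : X, ∃ B : Set (Set X), #B ≤ c ∧
    (∀ U ∈ B, IsOpen U) ∧ ⋂₀ B = {x}}

lemma soddnhd_mem [TopologicalSpace X] {k : ℕ} (hk : 1 ≤ k) {x : X} {U : Set X}
    (h : SOddNhd k x U) : x ∈ U := by
  obtain ⟨V, hop, hx, hch, htop⟩ := h
  have key : ∀ i, i < k → x ∈ V i := by
    intro i hi
    induction i with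
    | zero => exact hx
    | succ n ih => exact hch n hi (subset_closure (ih (by omega)))
  exact htop (key (k-1) (by omega))

lemma sopennhd_mem [TopologicalSpace X] {k : ℕ} (hk : 1 ≤ k) {x : X} {U : Set X}
    (h : SOpenNhd k x U) : x ∈ U := soddnhd_mem hk h.2

lemma soddnhd_inter [TopologicalSpace X] {k : ℕ} {x : X} {U W : Set X}
    (h : SOddNhd k x U) (h' : SOddNhd k x W) : SOddNhd k x (U ∩ W) := by
  obtain ⟨V, hop, hx, hch, htop⟩ := h
  obtain ⟨V', hop', hx', hch', htop'⟩ := h'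
  refine ⟨fun i => V i ∩ V' i, fun i hi => (hop i hi).inter (hop' i hi), ⟨hx, hx'⟩,
    fun i hi => Set.subset_inter
      (((closure_mono Set.inter_subset_left).trans (hch i hi)))
      (((closure_mono Set.inter_subset_right).trans (hch' i hi))),
    Set.inter_subset_inter htop htop'⟩

lemma sopennhd_inter [TopologicalSpace X] {k : ℕ} {x : X} {U W : Set X}
    (h : SOpenNhd k x U) (h' : SOpenNhd k x W) : SOpenNhd k x (U ∩ W) :=
  ⟨h.1.inter h'.1, soddnhd_inter h.2 h'.2⟩

lemma subset_thetaOdd [TopologicalSpace X] {k : ℕ} (hk : 1 ≤ k) (A : Set X) :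
    A ⊆ thetaOdd k A := fun a ha _U hU => ⟨a, sopennhd_mem hk hU, ha⟩

lemma isClosed_thetaOdd [TopologicalSpace X] {k : ℕ} (hk : 1 ≤ k) (A : Set X) :
    IsClosed (thetaOdd k A) := by
  rw [← isOpen_compl_iff, isOpen_iff_forall_mem_open]
  intro y hy
  simp only [Set.mem_compl_iff, thetaOdd, Set.mem_setOf_eq, not_forall] at hy
  obtain ⟨U, hU, hUA⟩ := hy
  obtain ⟨hUo, V, hop, hy0, hch, htop⟩ := hU
  refine ⟨V 0, ?_, hop 0 hk, hy0⟩
  intro z hz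
  exact fun hmem => hUA (hmem U ⟨hUo, V, hop, hz, hch, htop⟩)

lemma soddCover [TopologicalSpace X] {k : ℕ} (hk : 1 ≤ k) (A : Set X) (V : X → Set X)
    (hV : ∀ y ∈ A, SOpenNhd k y (V y)) :
    ∃ D ⊆ A, SOddDiscrete k D ∧ A ⊆ thetaOdd k D ∪ ⋃ d ∈ D, V d := by
  set S : Set (Set (X × Set X)) :=
    {P | ∀ p ∈ P, p.1 ∈ A ∧ SOpenNhd k p.1 p.2 ∧ p.2 ⊆ V p.1 ∧
      ∀ q ∈ P, q.1 ∈ p.2 → q.1 = p.1} with hS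
  obtain ⟨P, hPS, hPmax⟩ : ∃ P, Maximal (· ∈ S) P := by
    apply zorn_subset
    intro c hcS hchain
    refine ⟨⋃₀ c, ?_, fun s hs => Set.subset_sUnion_of_mem hs⟩
    intro p hp
    obtain ⟨P1, hP1, hpP1⟩ := hp
    refine ⟨(hcS hP1 p hpP1).1, (hcS hP1 p hpP1).2.1, (hcS hP1 p hpP1).2.2.1, ?_⟩
    intro q hq hqc
    obtain ⟨P2, hP2, hqP2⟩ := hq
    rcases hchain.total hP1 hP2 with h12 | h21
    · exact (hcS hP2 p (h12 hpP1)).2.2.2 q hqP2 hqc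
    · exact (hcS hP1 p hpP1).2.2.2 q (h21 hqP2) hqc
  refine ⟨Prod.fst '' P, ?_, ?_, ?_⟩
  · rintro y ⟨p, hp, rfl⟩
    exact (hPS p hp).1
  · rintro y ⟨p, hp, rfl⟩
    obtain ⟨hA, hnb, hsub, hiso⟩ := hPS p hp
    refine ⟨p.2, hnb, ?_⟩
    apply Set.eq_singleton_iff_unique_mem.mpr
    constructor
    · exact ⟨sopennhd_mem hk hnb, ⟨p, hp, rfl⟩⟩
    · rintro z ⟨hz2, q, hq, rfl⟩
      exact hiso q hq hz2
  · intro a ha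
    by_contra hna
    rw [Set.mem_union] at hna
    push_neg at hna
    obtain ⟨ha1, ha2⟩ := hna
    have haD : a ∉ Prod.fst '' P := fun hmem => ha1 (subset_thetaOdd hk _ hmem)
    have haV : ∀ p ∈ P, a ∉ V p.1 := by
      intro p hp hap
      exact ha2 (Set.mem_biUnion ⟨p, hp, rfl⟩ hap)
    obtain ⟨W, hW, hWD⟩ : ∃ W, SOpenNhd k a W ∧ ¬(W ∩ (Prod.fst '' P)).Nonempty := by
      by_contra hc
      push_neg at hc
      exact ha1 (fun U hU => hc U hU)
    have hW' : SOpenNhd k a (W ∩ V a) := sopennhd_inter hW ⟨(hV a ha).1, (hV a ha).2⟩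
    have hgood : insert (a, W ∩ V a) P ∈ S := by
      rintro p (rfl | hp)
      · refine ⟨ha, hW', Set.inter_subset_right, ?_⟩
        rintro q (rfl | hq)
        · intro _; rfl
        · intro hqm
          exact absurd ⟨q.1, hqm.1, ⟨q, hq, rfl⟩⟩ hWD
      · obtain ⟨c1, c2, c3, c4⟩ := hPS p hp
        refine ⟨c1, c2, c3, ?_⟩
        rintro q (rfl | hq)
        · intro hqm
          exact absurd (c3 hqm) (haV p hp)
        · exact c4 q hq
    have : insert (a, W ∩ V a) P = P := by
      have := hPmax hgood (Set.subset_insert _ _)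
      exact subset_antisymm this (Set.subset_insert _ _)
    exact haD ⟨(a, W ∩ V a), this ▸ Set.mem_insert _ _, rfl⟩

lemma ssep_pack [TopologicalSpace X] {k : ℕ} (hk : 1 ≤ k) {y x : X}
    (h : SSep (2 * k - 1) y {x}) :
    ∃ Z : ℕ → Set X,
      SOpenNhd k y (Z (k-1)) ∧ Z (k-1) ⊆ closure (Z (2*k-2)) ∧
      x ∉ closure (Z (2*k-2)) ∧ SOpenNhd k x (closure (Z (k-1)))ᶜ := by
  have e : 2*k-1 = (2*k-2)+1 := by omega
  rw [e] at h
  obtain ⟨Z, hop, hy0, hch, hcl⟩ := h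
  have hxcl : x ∉ closure (Z (2*k-2)) := by
    intro hx
    have : x ∈ closure (Z (2*k-2)) ∩ {x} := ⟨hx, rfl⟩
    rw [hcl] at this
    exact this
  have hstep : ∀ j, j + 1 ≤ 2*k-2 → Z j ⊆ Z (j+1) := fun j hj =>
    subset_closure.trans (hch j (by omega))
  have hmono : ∀ n, k-1+n ≤ 2*k-2 → Z (k-1) ⊆ Z (k-1+n) := by
    intro n
    induction n with
    | zero => intro _; exact subset_rfl
    | succ m ih => intro hm; exact (ih (by omega)).trans (hstep (k-1+m) (by omega))
  refine ⟨Z, ?_, ?_, hxcl, ?_⟩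
  · exact ⟨hop _ (by omega), Z, fun i hi => hop i (by omega), hy0,
      fun i hi => hch i (by omega), subset_rfl⟩
  · have := hmono (k-1) (by omega)
    rw [show k-1+(k-1) = 2*k-2 by omega] at this
    exact this.trans subset_closure
  · refine ⟨isOpen_compl_iff.mpr isClosed_closure,
      fun j => (closure (Z (2*k-2-j)))ᶜ, ?_, ?_, ?_, ?_⟩
    · intro i _
      exact isOpen_compl_iff.mpr isClosed_closure
    · simpa using hxcl
    · intro j hj
      have h1 : closure ((closure (Z (2*k-2-j)))ᶜ) ⊆ (Z (2*k-2-j))ᶜ :=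
        closure_minimal (Set.compl_subset_compl.mpr subset_closure)
          (hop (2*k-2-j) (by omega)).isClosed_compl
      refine h1.trans ?_
      apply Set.compl_subset_compl.mpr
      have := hch (2*k-2-(j+1)) (by omega)
      rw [show 2*k-2-(j+1)+1 = 2*k-2-j by omega] at this
      exact this
    · show (closure (Z (2*k-2-(k-1))))ᶜ ⊆ (closure (Z (k-1)))ᶜ
      rw [show 2*k-2-(k-1) = k-1 by omega]

theorem stmt13 (k : ℕ) (hk : 1 ≤ k) (X : Type u) [TopologicalSpace X]
    (h : SSpace (2 * k - 1) X) :
    psi X ≤ 2 ^ spreadOdd k X := by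
  have hℵκ : Cardinal.aleph0 ≤ spreadOdd k X := by
    unfold spreadOdd; exact le_sup_right
  have hℵ : Cardinal.aleph0 ≤ 2 ^ spreadOdd k X :=
    hℵκ.trans (Cardinal.cantor _).le
  have hsup : ∀ (D : Set X), SOddDiscrete k D → #D ≤ spreadOdd k X := by
    intro D hD
    unfold spreadOdd
    exact le_trans (le_ciSup (Cardinal.bddAbove_range _)
      (⟨D, hD⟩ : {D : Set X // SOddDiscrete k D})) le_sup_left
  apply csInf_le'
  refine ⟨hℵ, fun x => ?_⟩
  -- choose separating chains
  have H : ∀ y : X, ∃ Z : ℕ → Set X, y ≠ x →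
      SOpenNhd k y (Z (k-1)) ∧ Z (k-1) ⊆ closure (Z (2*k-2)) ∧
      x ∉ closure (Z (2*k-2)) ∧ SOpenNhd k x (closure (Z (k-1)))ᶜ := by
    intro y
    by_cases hyx : y = x
    · exact ⟨fun _ => ∅, fun hc => absurd hyx hc⟩
    · obtain ⟨Z, h1, h2, h3, h4⟩ := ssep_pack hk (h y x hyx)
      exact ⟨Z, fun _ => ⟨h1, h2, h3, h4⟩⟩
  choose Z hZ using H
  obtain ⟨D, hDA, hdisc, hcov⟩ := soddCover hk {x}ᶜ (fun y => Z y (k-1))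
    (fun y hy => (hZ y hy).1)
  set B : Set (Set X) :=
    ((fun E : Set X => (thetaOdd k E)ᶜ) '' {E : Set X | E ⊆ D ∧ x ∉ thetaOdd k E}) ∪
      ((fun d : X => (closure (Z d (2*k-2)))ᶜ) '' D) with hB
  refine ⟨B, ?_, ?_, ?_⟩
  · -- cardinality
    refine (Cardinal.mk_union_le _ _).trans ?_
    have h1 : #((fun E : Set X => (thetaOdd k E)ᶜ) ''
        {E : Set X | E ⊆ D ∧ x ∉ thetaOdd k E}) ≤ 2 ^ spreadOdd k X := by
      refine Cardinal.mk_image_le.trans ?_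
      refine (Cardinal.mk_le_mk_of_subset (s := {E : Set X | E ⊆ D ∧ x ∉ thetaOdd k E})
        (t := 𝒫 D) (fun E hE => hE.1)).trans ?_
      rw [Cardinal.mk_powerset]
      exact Cardinal.power_le_power_left (by norm_num) (hsup D hdisc)
    have h2 : #((fun d : X => (closure (Z d (2*k-2)))ᶜ) '' D) ≤ 2 ^ spreadOdd k X :=
      Cardinal.mk_image_le.trans ((hsup D hdisc).trans (Cardinal.cantor _).le)
    calc _ ≤ (2 ^ spreadOdd k X) + (2 ^ spreadOdd k X) := add_le_add h1 h2
      _ = 2 ^ spreadOdd k X := Cardinal.add_eq_self hℵ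
  · -- open
    rintro U (⟨E, _, rfl⟩ | ⟨d, _, rfl⟩)
    · exact isOpen_compl_iff.mpr (isClosed_thetaOdd hk E)
    · exact isOpen_compl_iff.mpr isClosed_closure
  · -- intersection
    apply subset_antisymm
    · intro z hz
      by_contra hzx
      have hzx' : z ≠ x := fun hzz => hzx (by rw [hzz]; rfl)
      have hzA : z ∈ ({x}ᶜ : Set X) := hzx'
      rcases hcov hzA with hzθ | hzV
      · obtain ⟨h1, h2, h3, h4⟩ := hZ z hzx'
        have hxE : x ∉ thetaOdd k (D ∩ Z z (k-1)) := by
          intro hmem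
          obtain ⟨w, hw1, hw2⟩ := hmem _ h4
          exact hw1 (subset_closure hw2.2)
        have hzE : z ∈ thetaOdd k (D ∩ Z z (k-1)) := by
          intro W hW
          have hW' : SOpenNhd k z (W ∩ Z z (k-1)) := sopennhd_inter hW h1
          obtain ⟨w, hw1, hw2⟩ := hzθ _ hW'
          exact ⟨w, hw1.1, hw2, hw1.2⟩
        have hBmem : (thetaOdd k (D ∩ Z z (k-1)))ᶜ ∈ B :=
          Set.mem_union_left _ ⟨D ∩ Z z (k-1), ⟨Set.inter_subset_left, hxE⟩, rfl⟩
        exact (hz _ hBmem) hzE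
      · rw [Set.mem_iUnion₂] at hzV
        obtain ⟨d, hd, hzd⟩ := hzV
        have hdx : d ≠ x := hDA hd
        obtain ⟨h1, h2, h3, h4⟩ := hZ d hdx
        have hBmem : (closure (Z d (2*k-2)))ᶜ ∈ B := Set.mem_union_right _ ⟨d, hd, rfl⟩
        exact (hz _ hBmem) (h2 hzd)
    · intro z hz
      have hz' : z = x := hz
      subst hz'
      rintro U (⟨E, hE, rfl⟩ | ⟨d, hd, rfl⟩)
      · exact hE.2
      · exact (hZ d (hDA hd)).2.2.1
end

section
/- Let k be a positive integer. For every S(2k)-space X, ψ(X) ≤ 2^{s_{2k}(X)}. -/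
open Cardinal Set

universe u

variable {X : Type u}

/- ===== auxiliary machinery ===== -/

section AuxRec

variable {T : Type u} {Y : Type u} [LinearOrder T] [WellFoundedLT T]

/-- Generic recursion along a well-order. -/
noncomputable def wfRec (pick : ∀ t : T, ({s : T // s < t} → Y) → Y) : T → Y :=
  (wellFounded_lt (α := T)).fix fun t IH => pick t fun s => IH s.1 s.2

theorem wfRec_eq (pick : ∀ t : T, ({s : T // s < t} → Y) → Y) (t : T) :
    wfRec pick t = pick t fun s => wfRec pick s.1 := by
  rw [wfRec, WellFounded.fix_eq]

theorem min_congr {r : T → T → Prop} (wf : WellFounded r) {s t : Set T} (e : s = t)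
    (hs : s.Nonempty) (ht : t.Nonempty) : wf.min s hs = wf.min t ht := by
  subst e; rfl

/-- A transfinite sequence avoiding previously chosen "forbidden" regions. -/
theorem exists_good_seq [Nonempty Y] (P : Y → Prop) (R : Y → Y → Prop)
    (hstep : ∀ t : T, ∀ f : {s : T // s < t} → Y, (∀ s, P (f s)) →
      ∃ z, P z ∧ ∀ s, R z (f s)) :
    ∃ g : T → Y, ∀ t, P (g t) ∧ ∀ s : T, s < t → R (g t) (g s) := by
  classical
  set pick : ∀ t : T, ({s : T // s < t} → Y) → Y := fun t f =>
    if hex : ∃ z, P z ∧ ∀ s, R z (f s) then hex.choose else Classical.arbitrary Y with hpick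
  have key : ∀ t, P (wfRec pick t) ∧ ∀ s : {s : T // s < t}, R (wfRec pick t) (wfRec pick s.1) := by
    intro t
    refine (wellFounded_lt (α := T)).induction
      (C := fun t => P (wfRec pick t) ∧ ∀ s : {s : T // s < t}, R (wfRec pick t) (wfRec pick s.1))
      t ?_
    intro t IH
    have hex : ∃ z, P z ∧ ∀ s : {s : T // s < t}, R z (wfRec pick s.1) :=
      hstep t (fun s => wfRec pick s.1) fun s => (IH s.1 s.2).1
    have heq : wfRec pick t = pick t fun s => wfRec pick s.1 := wfRec_eq pick t
    rw [heq]
    simp only [hpick]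
    rw [dif_pos hex]
    exact ⟨hex.choose_spec.1, fun s => hex.choose_spec.2 s⟩
  exact ⟨wfRec pick, fun t => ⟨(key t).1, fun s hs => (key t).2 ⟨s, hs⟩⟩⟩

end AuxRec

/-- Erdős–Rado style partition theorem for pairs with two colours:
`(2^κ)⁺ → (κ⁺)²₂`. -/
theorem erdosRadoBool {κ : Cardinal.{u}} (hκ : ℵ₀ ≤ κ) {T : Type u}
    [LinearOrder T] [WellFoundedLT T]
    (hcardT : Order.succ ((2 : Cardinal.{u}) ^ κ) ≤ #T)
    (c : T → T → Bool) :
    ∃ (v : Bool) (H : Set T),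
      Order.succ κ ≤ #H ∧ ∀ s ∈ H, ∀ t ∈ H, s < t → c s t = v := by
  classical
  set S := (Order.succ κ).ord.ToType with hS
  have hcardS : #S = Order.succ κ := by rw [hS, Cardinal.mk_toType, Cardinal.card_ord]
  have hIioS : ∀ s : S, #{s' : S // s' < s} ≤ κ := by
    intro s
    have := Cardinal.mk_Iio_ord_toType (c := Order.succ κ) s
    exact Order.lt_succ_iff.mp this
  set cc : T → T → Bool := fun u w => if u < w then c u w else c w u with hcc
  set Qs : T → ∀ s : S, ({s' : S // s' < s} → T) → Set T := fun a s f =>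
    {b : T | ∀ s' : {s' : S // s' < s}, b ≠ f s' ∧ cc (f s') b = cc (f s') a} with hQs
  set sa : T → S → T := fun a => wfRec (fun s f =>
    if h : (Qs a s f).Nonempty then (wellFounded_lt (α := T)).min (Qs a s f) h else a) with hsa
  have sa_eq : ∀ (a : T) (s : S), sa a s =
      if h : (Qs a s fun s' => sa a s'.1).Nonempty then
        (wellFounded_lt (α := T)).min (Qs a s fun s' => sa a s'.1) h else a := by
    intro a s
    simp only [hsa]
    exact wfRec_eq _ s
  have a_mem : ∀ (a : T) (s : S), (∀ s' : S, s' < s → sa a s' ≠ a) →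
      a ∈ Qs a s fun s' => sa a s'.1 := by
    intro a s hs s'
    exact ⟨Ne.symm (hs s'.1 s'.2), rfl⟩
  by_cases hA : ∀ a : T, ∃ s : S, sa a s = a
  · -- counting: every point is "captured", giving an injection T → small type
    exfalso
    set r : T → S := fun a => (wellFounded_lt (α := S)).min {s : S | sa a s = a} (hA a) with hr
    have hr_mem : ∀ a, sa a (r a) = a := fun a =>
      (wellFounded_lt (α := S)).min_mem {s : S | sa a s = a} (hA a)
    have hr_min : ∀ a, ∀ s : S, s < r a → sa a s ≠ a := by
      intro a s hs hcon
      exact (wellFounded_lt (α := S)).not_lt_min {s : S | sa a s = a} hcon hs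
    set F : T → Σ s : S, ({s' : S // s' < s} → Bool) := fun a =>
      ⟨r a, fun s' => cc (sa a s'.1) a⟩ with hF
    have hFinj : Function.Injective F := by
      intro a b hab
      have h1 : r a = r b := congrArg Sigma.fst hab
      have htr : ∀ s' : S, s' < r a → cc (sa a s') a = cc (sa b s') b := by
        intro s' hs'
        have h2 := congrArg (fun p : Σ s : S, ({s' : S // s' < s} → Bool) =>
          if h : s' < p.1 then p.2 ⟨s', h⟩ else true) hab
        simp only [hF] at h2
        rw [dif_pos hs', dif_pos (h1 ▸ hs')] at h2
        exact h2
      have main : ∀ s : S, s ≤ r a → sa a s = sa b s := by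
        intro s
        refine (wellFounded_lt (α := S)).induction
          (C := fun s => s ≤ r a → sa a s = sa b s) s ?_
        intro s IH hs
        have hfe : ∀ s' : {s' : S // s' < s}, sa a s'.1 = sa b s'.1 :=
          fun s' => IH s'.1 s'.2 ((le_of_lt s'.2).trans hs)
        have hce2 : ∀ s' : {s' : S // s' < s}, cc (sa a s'.1) a = cc (sa a s'.1) b := by
          intro s'
          have h5 := htr s'.1 (lt_of_lt_of_le s'.2 hs)
          rwa [← hfe s'] at h5
        have hQeq : (Qs a s fun s' => sa a s'.1) = Qs b s fun s' => sa b s'.1 := by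
          ext w
          simp only [hQs, Set.mem_setOf_eq]
          constructor
          · intro hw s'
            obtain ⟨hw1, hw2⟩ := hw s'
            rw [← hfe s']
            exact ⟨hw1, hw2.trans (hce2 s')⟩
          · intro hw s'
            obtain ⟨hw1, hw2⟩ := hw s'
            rw [← hfe s'] at hw1 hw2
            exact ⟨hw1, hw2.trans (hce2 s').symm⟩
        have hnea : (Qs a s fun s' => sa a s'.1).Nonempty :=
          ⟨a, a_mem a s fun s' hs' => hr_min a s' (lt_of_lt_of_le hs' hs)⟩
        have hneb : (Qs b s fun s' => sa b s'.1).Nonempty := hQeq ▸ hnea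
        rw [sa_eq a s, sa_eq b s, dif_pos hnea, dif_pos hneb]
        exact min_congr _ hQeq hnea hneb
      calc a = sa a (r a) := (hr_mem a).symm
        _ = sa b (r a) := main (r a) le_rfl
        _ = sa b (r b) := by rw [h1]
        _ = b := hr_mem b
    have hbound : #T ≤ 2 ^ κ := by
      have h1 : #T ≤ #(Σ s : S, ({s' : S // s' < s} → Bool)) := Cardinal.mk_le_of_injective hFinj
      have h2 : #(Σ s : S, ({s' : S // s' < s} → Bool)) =
          Cardinal.sum fun s : S => #({s' : S // s' < s} → Bool) := Cardinal.mk_sigma _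
      have h3 : ∀ s : S, #({s' : S // s' < s} → Bool) ≤ 2 ^ κ := by
        intro s
        have e1 : #({s' : S // s' < s} → Bool) = (2 : Cardinal.{u}) ^ #{s' : S // s' < s} := by
          rw [Cardinal.mk_arrow]
          simp
        rw [e1]
        exact Cardinal.power_le_power_left two_ne_zero (hIioS s)
      have h4 : (Cardinal.sum fun s : S => #({s' : S // s' < s} → Bool)) ≤
          Cardinal.sum fun _ : S => (2 : Cardinal) ^ κ := Cardinal.sum_le_sum _ _ h3
      have h5 : (Cardinal.sum fun _ : S => (2 : Cardinal) ^ κ) = #S * 2 ^ κ :=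
        Cardinal.sum_const' S _
      have h6 : #S * (2 : Cardinal) ^ κ = 2 ^ κ := by
        rw [hcardS]
        exact Cardinal.mul_eq_right (hκ.trans (Cardinal.cantor κ).le)
          (Order.succ_le_of_lt (Cardinal.cantor κ))
          (lt_of_le_of_lt zero_le (Order.lt_succ κ)).ne'
      calc #T ≤ _ := h1
        _ = _ := h2
        _ ≤ _ := h4
        _ = #S * 2 ^ κ := h5
        _ = 2 ^ κ := h6
    exact absurd (hcardT.trans hbound) (Order.lt_succ _ : (2 : Cardinal.{u}) ^ κ < Order.succ ((2 : Cardinal.{u}) ^ κ)).not_ge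
  · push_neg at hA
    obtain ⟨a, ha⟩ := hA
    have key : ∀ s : S, sa a s ∈ Qs a s fun s' => sa a s'.1 := by
      intro s
      have hne : (Qs a s fun s' => sa a s'.1).Nonempty := ⟨a, a_mem a s fun s' _ => ha s'⟩
      rw [sa_eq a s, dif_pos hne]
      exact (wellFounded_lt (α := T)).min_mem _ hne
    have hdist : ∀ s' s : S, s' < s → sa a s ≠ sa a s' := fun s' s hlt => (key s ⟨s', hlt⟩).1
    have hccc : ∀ s' s : S, s' < s → cc (sa a s') (sa a s) = cc (sa a s') a :=
      fun s' s hlt => (key s ⟨s', hlt⟩).2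
    have hinj : Function.Injective (sa a) := by
      intro s1 s2 he
      by_contra hne
      rcases lt_trichotomy s1 s2 with hlt | heq | hlt
      · exact hdist s1 s2 hlt he.symm
      · exact hne heq
      · exact hdist s2 s1 hlt he
    have hex : ∃ v : Bool, κ < #{s : S | cc (sa a s) a = v} := by
      by_contra hno
      push_neg at hno
      have huniv : {s : S | cc (sa a s) a = true} ∪ {s : S | cc (sa a s) a = false} =
          Set.univ := by
        ext s
        simp only [Set.mem_union, Set.mem_setOf_eq, Set.mem_univ, iff_true]
        rcases Bool.eq_false_or_eq_true (cc (sa a s) a) with h | h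
        · exact Or.inl h
        · exact Or.inr h
      have : #S ≤ κ := by
        calc #S = #(Set.univ : Set S) := Cardinal.mk_univ.symm
          _ = #(↥({s : S | cc (sa a s) a = true} ∪ {s : S | cc (sa a s) a = false})) := by
              rw [huniv]
          _ ≤ #{s : S | cc (sa a s) a = true} + #{s : S | cc (sa a s) a = false} :=
              Cardinal.mk_union_le _ _
          _ ≤ κ + κ := add_le_add (hno true) (hno false)
          _ = κ := Cardinal.add_eq_self hκ
      rw [hcardS] at this
      exact absurd this (Order.lt_succ κ : κ < Order.succ κ).not_ge
    obtain ⟨v, hv⟩ := hex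
    refine ⟨v, sa a '' {s : S | cc (sa a s) a = v}, ?_, ?_⟩
    · rw [Cardinal.mk_image_eq hinj]
      exact Order.succ_le_of_lt hv
    · rintro s ⟨p, hp, rfl⟩ t ⟨q, hq, rfl⟩ hlt
      rcases lt_trichotomy p q with hpq | rfl | hpq
      · have hp' : cc (sa a p) a = v := hp
        have h2 := (hccc p q hpq).trans hp'
        have h3 : cc (sa a p) (sa a q) = c (sa a p) (sa a q) := by
          simp only [hcc]
          exact if_pos hlt
        rwa [h3] at h2
      · exact absurd rfl hlt.ne
      · have hq' : cc (sa a q) a = v := hq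
        have h2 := (hccc q p hpq).trans hq'
        have h3 : cc (sa a q) (sa a p) = c (sa a p) (sa a q) := by
          simp only [hcc]
          exact if_neg (asymm hlt)
        rwa [h3] at h2

theorem stmt14 (k : ℕ) (hk : 1 ≤ k) (X : Type u) [TopologicalSpace X]
    (h : SSpace (2 * k) X) :
    psi X ≤ 2 ^ spreadEven k X := by
  classical
  have hκ : ℵ₀ ≤ spreadEven k X := le_sup_right
  set κ := spreadEven k X with hκdef
  have h2κ : ℵ₀ ≤ 2 ^ κ := hκ.trans (Cardinal.cantor κ).le
  have key : ∀ x : X, ∃ B : Set (Set X), #B ≤ 2 ^ κ ∧ (∀ U ∈ B, IsOpen U) ∧ ⋂₀ B = {x} := by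
    intro x
    by_contra hcon
    push_neg at hcon
    set N := 2 * k - 1 with hN
    -- separating chains around each point `y ≠ x`, avoiding `x`
    have hsep : ∀ y : X, ∃ C : ℕ → Set X, y ≠ x →
        (∀ i ≤ N, IsOpen (C i)) ∧ y ∈ C 0 ∧ (∀ i < N, closure (C i) ⊆ C (i + 1)) ∧
          x ∉ closure (C N) := by
      intro y
      by_cases hy : y = x
      · exact ⟨fun _ => ∅, fun hne => absurd hy hne⟩
      · have h2 : SSep (N + 1) y {x} := by
          have e : N + 1 = 2 * k := by omega
          rw [e]
          exact h y x hy
        obtain ⟨U, h1, h2', h3, h4⟩ := h2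
        refine ⟨U, fun _ => ⟨h1, h2', h3, fun hx => ?_⟩⟩
        have hmem : x ∈ closure (U N) ∩ {x} := ⟨hx, rfl⟩
        rw [h4] at hmem
        exact hmem
    choose C hC using hsep
    -- chain monotonicity
    have mono : ∀ y : X, y ≠ x → ∀ j i : ℕ, i ≤ j → j ≤ N → C y i ⊆ C y j := by
      intro y hy j
      induction j with
      | zero =>
        intro i hij _
        obtain rfl : i = 0 := Nat.le_zero.mp hij
        exact subset_rfl
      | succ j ih =>
        intro i hij hjN
        rcases eq_or_lt_of_le hij with rfl | hlt
        · exact subset_rfl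
        · have h1 : C y i ⊆ C y j := ih i (by omega) (by omega)
          exact h1.trans (subset_closure.trans ((hC y hy).2.2.1 j (by omega)))
    have hmemC : ∀ y : X, y ≠ x → ∀ i ≤ N, y ∈ C y i := by
      intro y hy i hi
      exact mono y hy i 0 (Nat.zero_le _) hi ((hC y hy).2.1)
    -- the transfinite sequence
    set T := (Order.succ ((2 : Cardinal.{u}) ^ κ)).ord.ToType with hT
    have hIioT : ∀ t : T, #{s : T // s < t} ≤ 2 ^ κ := by
      intro t
      have := Cardinal.mk_Iio_ord_toType (c := Order.succ ((2 : Cardinal.{u}) ^ κ)) t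
      exact Order.lt_succ_iff.mp this
    have : Nonempty X := ⟨x⟩
    obtain ⟨g, hg⟩ := exists_good_seq (T := T) (Y := X) (fun z => z ≠ x)
      (fun z w => z ∉ closure (C w N))
      (by
        intro t f hf
        set B : Set (Set X) := Set.range (fun s : {s : T // s < t} => (closure (C (f s) N))ᶜ)
          with hB
        have hBcard : #B ≤ 2 ^ κ := Cardinal.mk_range_le.trans (hIioT t)
        have hBopen : ∀ U ∈ B, IsOpen U := by
          rintro U ⟨s, rfl⟩
          exact isClosed_closure.isOpen_compl
        have hne := hcon B hBcard hBopen
        have hxB : x ∈ ⋂₀ B := by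
          rintro U ⟨s, rfl⟩
          exact (hC (f s) (hf s)).2.2.2
        have hnsub : ¬⋂₀ B ⊆ {x} := fun hsub =>
          hne (hsub.antisymm (Set.singleton_subset_iff.mpr hxB))
        obtain ⟨z, hzB, hzx⟩ := Set.not_subset.mp hnsub
        refine ⟨z, hzx, fun s => ?_⟩
        exact hzB _ ⟨s, rfl⟩)
    -- hg : ∀ t, g t ≠ x ∧ ∀ s < t, g t ∉ closure (C (g s) N)
    have ginj : ∀ s t : T, g s = g t → s = t := by
      intro s t he
      by_contra hne
      rcases lt_trichotomy s t with hlt | heq | hlt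
      · exact (hg t).2 s hlt
          (Set.mem_of_eq_of_mem he.symm (subset_closure (hmemC (g s) (hg s).1 N le_rfl)))
      · exact hne heq
      · exact (hg s).2 t hlt
          (Set.mem_of_eq_of_mem he (subset_closure (hmemC (g t) (hg t).1 N le_rfl)))
    -- the standard S(2k-1)-neighbourhood of a point
    have std_nbhd : ∀ y : X, y ≠ x → SOpenNhd k y (C y (k - 1)) := by
      intro y hy
      obtain ⟨hop, hy0, hch, _⟩ := hC y hy
      exact ⟨hop (k - 1) (by omega), fun i => C y i, fun i hi => hop i (by omega), hy0,
        fun i hi => hch i (by omega), subset_rfl⟩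
    -- colour pairs
    set col : T → T → Bool := fun s t => decide (g s ∈ closure (C (g t) (k - 1))) with hcol
    have hcardT : Order.succ ((2 : Cardinal.{u}) ^ κ) ≤ #T := by
      rw [hT, Cardinal.mk_toType, Cardinal.card_ord]
    obtain ⟨v, H, hHcard, hHhom⟩ := erdosRadoBool hκ hcardT col
    have hcol_true : ∀ s t : T, col s t = true → g s ∈ closure (C (g t) (k - 1)) := by
      intro s t hst
      simp only [hcol] at hst
      exact of_decide_eq_true hst
    have hcol_false : ∀ s t : T, col s t = false → g s ∉ closure (C (g t) (k - 1)) := by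
      intro s t hst
      simp only [hcol] at hst
      exact of_decide_eq_false hst
    -- from an S(2k)-discrete set of size κ⁺ we get a contradiction
    have spread_bound : ∀ D : Set T, Order.succ κ ≤ #D → ¬SEvenDiscrete k (g '' D) := by
      intro D hDcard hD
      have hinj : Set.InjOn g D := fun a _ b _ hab => ginj a b hab
      have h1 : #(↥(g '' D)) = #↥D := Cardinal.mk_image_eq_of_injOn g D hinj
      have h2 : #(↥(g '' D)) ≤ ⨆ E : {E : Set X // SEvenDiscrete k E}, #E.1 :=
        le_ciSup (Cardinal.bddAbove_range _) (⟨g '' D, hD⟩ : {E : Set X // SEvenDiscrete k E})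
      have h3 : (⨆ E : {E : Set X // SEvenDiscrete k E}, #E.1) ≤ κ := by
        rw [hκdef, spreadEven]
        exact le_sup_left
      have h4 : Order.succ κ ≤ κ := by
        calc Order.succ κ ≤ #↥D := hDcard
          _ = #(↥(g '' D)) := h1.symm
          _ ≤ _ := h2
          _ ≤ κ := h3
      exact absurd h4 (Order.lt_succ κ : κ < Order.succ κ).not_ge
    -- CASE ANALYSIS on the homogeneous colour
    rcases v with _ | _
    · -- v = false : the image of H is S(2k)-discrete
      refine spread_bound H hHcard ?_
      rintro z ⟨t, ht, rfl⟩
      refine ⟨C (g t) (k - 1), std_nbhd (g t) (hg t).1, ?_⟩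
      ext w
      simp only [Set.mem_inter_iff, Set.mem_singleton_iff]
      constructor
      · rintro ⟨hwcl, s, hs, rfl⟩
        rcases lt_trichotomy s t with hlt | heq | hlt
        · exact absurd hwcl (hcol_false s t (hHhom s hs t ht hlt))
        · rw [heq]
        · have hmem := (hg s).2 t hlt
          have hsub : closure (C (g t) (k - 1)) ⊆ closure (C (g t) N) :=
            closure_mono (mono (g t) (hg t).1 N (k - 1) (by omega) le_rfl)
          exact absurd (hsub hwcl) hmem
      · rintro rfl
        exact ⟨subset_closure (hmemC (g t) (hg t).1 (k - 1) (by omega)), ⟨t, ht, rfl⟩⟩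
    · -- v = true : pass to "successor" elements of H
      set H' := {t : T | t ∈ H ∧ ∃ r, r ∈ H ∧ t < r} with hH'
      set nxt : T → T := fun t =>
        if hne : {r : T | r ∈ H ∧ t < r}.Nonempty then
          (wellFounded_lt (α := T)).min {r : T | r ∈ H ∧ t < r} hne else t with hnxt
      have hnxt_spec : ∀ t ∈ H', nxt t ∈ H ∧ t < nxt t ∧ ∀ r ∈ H, r < nxt t → r ≤ t := by
        intro t ht
        obtain ⟨htH, r, hrH, htr⟩ := ht
        have hne : {r : T | r ∈ H ∧ t < r}.Nonempty := ⟨r, hrH, htr⟩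
        have hval : nxt t = (wellFounded_lt (α := T)).min {r : T | r ∈ H ∧ t < r} hne := by
          simp only [hnxt]
          rw [dif_pos hne]
        have hmem := (wellFounded_lt (α := T)).min_mem {r : T | r ∈ H ∧ t < r} hne
        rw [hval]
        refine ⟨hmem.1, hmem.2, fun r' hr' hlt => ?_⟩
        by_contra hgt
        push_neg at hgt
        exact (wellFounded_lt (α := T)).not_lt_min {r : T | r ∈ H ∧ t < r} ⟨hr', hgt⟩ hlt
      have hH'card : κ < #↥H' := by
        by_contra hno
        push_neg at hno
        have hsub : H ⊆ H' ∪ {t : T | t ∈ H ∧ ∀ r ∈ H, ¬t < r} := by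
          intro t ht
          by_cases hc : ∃ r, r ∈ H ∧ t < r
          · exact Or.inl ⟨ht, hc⟩
          · push_neg at hc
            exact Or.inr ⟨ht, fun r hr => not_lt.mpr (hc r hr)⟩
        have hsing : {t : T | t ∈ H ∧ ∀ r ∈ H, ¬t < r}.Subsingleton := by
          intro a ha b hb
          rcases lt_trichotomy a b with hlt | heq | hlt
          · exact absurd hlt (ha.2 b hb.1)
          · exact heq
          · exact absurd hlt (hb.2 a ha.1)
        have hle : #↥H ≤ κ := by
          calc #↥H ≤ #(↥(H' ∪ {t : T | t ∈ H ∧ ∀ r ∈ H, ¬t < r})) :=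
                Cardinal.mk_le_mk_of_subset hsub
            _ ≤ #↥H' + #↥{t : T | t ∈ H ∧ ∀ r ∈ H, ¬t < r} := Cardinal.mk_union_le _ _
            _ ≤ κ + 1 := add_le_add hno (Cardinal.mk_le_one_iff_set_subsingleton.mpr hsing)
            _ ≤ κ + κ := add_le_add_right (Cardinal.one_lt_aleph0.le.trans hκ) κ
            _ = κ := Cardinal.add_eq_self hκ
        exact absurd (hHcard.trans hle) (Order.lt_succ κ : κ < Order.succ κ).not_ge
      set Hs := {t : T | t ∈ H ∧ ∃ p, p ∈ H ∧ p < t ∧ ∀ r ∈ H, r < t → r ≤ p} with hHs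
      have hnxtHs : ∀ t ∈ H', nxt t ∈ Hs := by
        intro t ht
        obtain ⟨h1, h2, h3⟩ := hnxt_spec t ht
        exact ⟨h1, t, ht.1, h2, h3⟩
      have hnxt_mono : ∀ a ∈ H', ∀ b ∈ H', a < b → nxt a < nxt b := by
        intro a ha b hb hab
        obtain ⟨hbH, hblt, _⟩ := hnxt_spec b hb
        obtain ⟨_, _, hamax⟩ := hnxt_spec a ha
        have hle : nxt a ≤ b := by
          by_contra hgt
          push_neg at hgt
          exact absurd hab (not_lt.mpr (hamax b hb.1 hgt))
        exact hle.trans_lt hblt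
      have hnxtinj : Set.InjOn nxt H' := by
        intro a ha b hb he
        by_contra hne
        rcases lt_trichotomy a b with hlt | heq | hlt
        · exact absurd he (hnxt_mono a ha b hb hlt).ne
        · exact hne heq
        · exact absurd he.symm (hnxt_mono b hb a ha hlt).ne
      have hHscard : Order.succ κ ≤ #↥Hs := by
        calc Order.succ κ ≤ #↥H' := Order.succ_le_of_lt hH'card
          _ = #(↥(nxt '' H')) := (Cardinal.mk_image_eq_of_injOn nxt H' hnxtinj).symm
          _ ≤ #↥Hs := Cardinal.mk_le_mk_of_subset (by
              rintro _ ⟨t, ht, rfl⟩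
              exact hnxtHs t ht)
      refine spread_bound Hs hHscard ?_
      rintro z ⟨q, hq, rfl⟩
      obtain ⟨hqH, p, hpH, hpq, hpmax⟩ := hq
      obtain ⟨hopq, hq0, hchq, _⟩ := hC (g q) (hg q).1
      obtain ⟨hopp, hp0, hchp, _⟩ := hC (g p) (hg p).1
      have hqGp : g q ∉ closure (C (g p) N) := (hg q).2 p hpq
      have hclk : closure (C (g p) k) ⊆ closure (C (g p) N) :=
        closure_mono (mono (g p) (hg p).1 N k (by omega) le_rfl)
      have hqnk : g q ∉ closure (C (g p) k) := fun hmem => hqGp (hclk hmem)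
      have hcompl : closure ((closure (C (g p) k))ᶜ) ⊆ (C (g p) k)ᶜ :=
        closure_minimal (Set.compl_subset_compl.mpr subset_closure)
          (hopp k (by omega)).isClosed_compl
      refine ⟨C (g q) (k - 1) ∩ (closure (C (g p) k))ᶜ,
        ⟨(hopq (k - 1) (by omega)).inter isClosed_closure.isOpen_compl, ?_⟩, ?_⟩
      · -- the S(2k-1)-chain for this neighbourhood
        refine ⟨fun i => C (g q) i ∩ (closure (C (g p) (N - i)))ᶜ, ?_, ?_, ?_, ?_⟩
        · intro i hi
          exact (hopq i (by omega)).inter isClosed_closure.isOpen_compl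
        · exact ⟨hq0, by simpa using hqGp⟩
        · intro i hi
          intro w hw
          have hw1 : w ∈ closure (C (g q) i) :=
            closure_mono Set.inter_subset_left hw
          have hw2 : w ∈ closure ((closure (C (g p) (N - i)))ᶜ) :=
            closure_mono Set.inter_subset_right hw
          have e1 : closure (C (g q) i) ⊆ C (g q) (i + 1) := hchq i (by omega)
          have e2 : closure ((closure (C (g p) (N - i)))ᶜ) ⊆ (C (g p) (N - i))ᶜ :=
            closure_minimal (Set.compl_subset_compl.mpr subset_closure)
              (hopp (N - i) (by omega)).isClosed_compl
          have e3 : (C (g p) (N - i))ᶜ ⊆ (closure (C (g p) (N - (i + 1))))ᶜ := by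
            apply Set.compl_subset_compl.mpr
            have e4 : closure (C (g p) (N - (i + 1))) ⊆ C (g p) (N - (i + 1) + 1) :=
              hchp _ (by omega)
            have e5 : N - (i + 1) + 1 = N - i := by omega
            rw [e5] at e4
            exact e4
          exact ⟨e1 hw1, e3 (e2 hw2)⟩
        · intro w hw
          exact ⟨hw.1, (show N - (k - 1) = k by omega) ▸ hw.2⟩
      · -- the closure meets the image of Hs only in `g q`
        ext w
        simp only [Set.mem_inter_iff, Set.mem_singleton_iff]
        constructor
        · rintro ⟨hwcl, s, hs, rfl⟩
          rcases lt_trichotomy s q with hlt | heq | hlt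
          · exfalso
            have hsp : g s ∈ C (g p) k := by
              have hsq : s ≤ p := hpmax s hs.1 hlt
              rcases eq_or_lt_of_le hsq with rfl | hslt
              · exact hmemC (g s) (hg s).1 k (by omega)
              · have hcl : g s ∈ closure (C (g p) (k - 1)) :=
                  hcol_true s p (hHhom s hs.1 p hpH hslt)
                have e6 : closure (C (g p) (k - 1)) ⊆ C (g p) (k - 1 + 1) :=
                  hchp (k - 1) (by omega)
                rw [show k - 1 + 1 = k by omega] at e6
                exact e6 hcl
            have hw2 : g s ∈ (C (g p) k)ᶜ :=
              hcompl (closure_mono Set.inter_subset_right hwcl)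
            exact hw2 hsp
          · rw [heq]
          · exfalso
            have hmem := (hg s).2 q hlt
            have hsub : closure (C (g q) (k - 1) ∩ (closure (C (g p) k))ᶜ) ⊆
                closure (C (g q) N) :=
              closure_mono (Set.inter_subset_left.trans
                (mono (g q) (hg q).1 N (k - 1) (by omega) le_rfl))
            exact hmem (hsub hwcl)
        · rintro rfl
          exact ⟨subset_closure ⟨hmemC (g q) (hg q).1 (k - 1) (by omega), hqnk⟩,
            ⟨q, ⟨hqH, p, hpH, hpq, hpmax⟩, rfl⟩⟩

  have hmem : (2 : Cardinal) ^ κ ∈ {c : Cardinal | ℵ₀ ≤ c ∧ ∀ x : X, ∃ B : Set (Set X),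
      Cardinal.mk B ≤ c ∧ (∀ U ∈ B, IsOpen U) ∧ ⋂₀ B = {x}} := ⟨h2κ, key⟩
  unfold psi
  exact csInf_le' hmem
end

section
/- Let k be a positive integer. For every S(3k)-space X, ψ_{2k}(X) ≤ 2^{s_{2k}(X)}. In particular, for every S(3)-space X, the closed pseudocharacter ψ_c(X) satisfies ψ_c(X) ≤ 2^{Us(X)} where Us(X) is the Urysohn spread. -/
open Cardinal Set

universe u

variable {X : Type u}

namespace Stmt16Aux

open Cardinal Set Ordinal

variable {X : Type u} [TopologicalSpace X]

/-- A separating chain of length `m+1` of open sets around `a`, avoiding `b`. -/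
structure Chart (m : ℕ) (a b : X) : Type u where
  U : ℕ → Set X
  opn : ∀ i ≤ m, IsOpen (U i)
  mem0 : a ∈ U 0
  nest : ∀ i < m, closure (U i) ⊆ U (i+1)
  avoid : b ∉ closure (U m)

namespace Chart

variable {m : ℕ} {a b : X} (c : Chart m a b)

lemma mono : ∀ {j}, j ≤ m → ∀ {i}, i ≤ j → c.U i ⊆ c.U j := by
  intro j
  induction j with
  | zero => intro _ i hi; interval_cases i; exact subset_rfl
  | succ n ih =>
      intro hj i hi
      rcases Nat.lt_or_ge i (n+1) with h | h
      · exact ((ih (by omega) (by omega)).trans subset_closure).trans (c.nest n (by omega))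
      · have : i = n + 1 := by omega
        subst this; exact subset_rfl

lemma closure_subset {i j : ℕ} (hij : i < j) (hj : j ≤ m) :
    closure (c.U i) ⊆ c.U j :=
  (c.nest i (by omega)).trans (c.mono hj (by omega))

lemma mem {j : ℕ} (hj : j ≤ m) : a ∈ c.U j := c.mono hj (Nat.zero_le j) c.mem0

lemma avoid' {i : ℕ} (hi : i ≤ m) : b ∉ closure (c.U i) :=
  fun h => c.avoid (closure_mono (c.mono le_rfl hi) h)

end Chart

variable {q : ℕ}

/-- Levels at or above `q` in a chart give open S(2(q+1)-1)-neighborhoods of the center. -/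
lemma sOpenNhd_level {a b : X} (c : Chart (3*q+2) a b) {j : ℕ} (hj1 : q ≤ j) (hj2 : j ≤ 3*q+2) :
    SOpenNhd (q+1) a (c.U j) := by
  refine ⟨c.opn j hj2, c.U, fun i hi => c.opn i (by omega), c.mem0,
    fun i hi => c.nest i (by omega), ?_⟩
  simpa using c.mono hj2 hj1

/-- The complement of the closure of level `2q+2` is an open S-neighborhood of the avoided
point. -/
lemma sOpenNhd_compl {a b : X} (c : Chart (3*q+2) a b) :
    SOpenNhd (q+1) b (closure (c.U (2*q+2)))ᶜ := by
  refine ⟨isClosed_closure.isOpen_compl, fun i => (closure (c.U (3*q+2 - i)))ᶜ,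
    fun i hi => isClosed_closure.isOpen_compl, by simpa using c.avoid, ?_, ?_⟩
  · intro i hi
    have h1 : closure ((closure (c.U (3*q+2 - i)))ᶜ) ⊆ (c.U (3*q+2 - i))ᶜ :=
      closure_minimal (compl_subset_compl.mpr subset_closure)
        (c.opn _ (by omega)).isClosed_compl
    refine h1.trans (compl_subset_compl.mpr ?_)
    have h2 : 3*q+2-(i+1)+1 = 3*q+2-i := by omega
    rw [← h2]
    exact c.nest _ (by omega)
  · show (closure (c.U (3*q+2 - (q+1-1))))ᶜ ⊆ (closure (c.U (2*q+2)))ᶜ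
    have h : 3*q+2 - (q+1-1) = 2*q+2 := by omega
    rw [h]

/-- Witness neighborhood for the mixed case. -/
lemma sOpenNhd_inter {a b a' : X} (c : Chart (3*q+2) a b) (d : Chart (3*q+2) a' b)
    (hd : a ∉ d.U (2*q+2)) :
    SOpenNhd (q+1) a (c.U (2*q+1) ∩ (closure (d.U (q+1)))ᶜ) := by
  have havoid : ∀ {n}, q+1 ≤ n → n ≤ 2*q+1 → a ∉ closure (d.U n) := by
    intro n h1 h2 h
    exact hd (d.closure_subset (show n < 2*q+2 by omega) (by omega) h)
  refine ⟨(c.opn _ (by omega)).inter isClosed_closure.isOpen_compl,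
    fun i => c.U i ∩ (closure (d.U (2*q+1 - i)))ᶜ,
    fun i hi => (c.opn i (by omega)).inter isClosed_closure.isOpen_compl,
    ⟨c.mem0, by simpa using havoid (by omega) (by omega)⟩, ?_, ?_⟩
  · intro i hi
    refine (closure_inter_subset_inter_closure _ _).trans ?_
    apply Set.inter_subset_inter
    · exact c.closure_subset (by omega) (by omega)
    · have h1 : closure ((closure (d.U (2*q+1 - i)))ᶜ) ⊆ (d.U (2*q+1 - i))ᶜ :=
        closure_minimal (compl_subset_compl.mpr subset_closure)
          (d.opn _ (by omega)).isClosed_compl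
      refine h1.trans (compl_subset_compl.mpr ?_)
      have h2 : 2*q+1-(i+1)+1 = 2*q+1-i := by omega
      rw [← h2]
      exact d.nest _ (by omega)
  · show c.U (q+1-1) ∩ (closure (d.U (2*q+1 - (q+1-1))))ᶜ ⊆ _
    have h1 : q+1-1 = q := by omega
    rw [h1]
    have h2 : 2*q+1-q = q+1 := by omega
    rw [h2]
    exact Set.inter_subset_inter (c.mono (by omega) (by omega)) subset_rfl

lemma sOddNhd_mem {x : X} {U : Set X} (h : SOddNhd (q+1) x U) : x ∈ U := by
  obtain ⟨V, _, hmem, hnest, htop⟩ := h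
  have : ∀ j, j ≤ q → x ∈ V j := by
    intro j
    induction j with
    | zero => intro _; exact hmem
    | succ n ih => intro hj; exact hnest n (by omega) (subset_closure (ih (by omega)))
  have := this q le_rfl
  simpa using htop (by simpa using this)

/-- Extract a chart from the S(3k)-space property. -/
lemma exists_chart (hS : SSpace (3*(q+1)) X) {a b : X} (h : a ≠ b) :
    Nonempty (Chart (3*q+2) a b) := by
  have h3 : 3*(q+1) = (3*q+2)+1 := by omega
  have := hS a b h
  rw [h3] at this
  obtain ⟨U, hopen, hmem, hnest, hsep⟩ := this
  exact ⟨⟨U, hopen, hmem, hnest, by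
    intro hb
    have : b ∈ closure (U (3*q+2)) ∩ {b} := ⟨hb, rfl⟩
    simp [hsep] at this⟩⟩

end Stmt16Aux
namespace Stmt16Aux

open Cardinal Set Ordinal

universe v

variable {ι : Type v} {C : Type v}

/-- Symmetrized coloring. -/
noncomputable def symCol [LinearOrder ι] (f : ι → ι → C) : ι → ι → C := fun u v =>
  open scoped Classical in if u < v then f u v else f v u

lemma symCol_comm [LinearOrder ι] (f : ι → ι → C) (u v : ι) :
    symCol f u v = symCol f v u := by
  classical
  rcases lt_trichotomy u v with h | h | h
  · rw [symCol, symCol]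
    rw [if_pos h, if_neg (asymm h)]
  · subst h; rfl
  · rw [symCol, symCol]
    rw [if_neg (asymm h), if_pos h]

lemma symCol_of_lt [LinearOrder ι] (f : ι → ι → C) {u v : ι} (h : u < v) :
    symCol f u v = f u v := by
  classical
  rw [symCol, if_pos h]

/-- Realizers of the type of `b` over `A`. -/
def rset [LinearOrder ι] (f : ι → ι → C) (A : Set ι) (b : ι) : Set ι :=
  {m | ∀ a ∈ A, symCol f a m = symCol f a b}

lemma self_mem_rset [LinearOrder ι] (f : ι → ι → C) (A : Set ι) (b : ι) :
    b ∈ rset f A b := fun _ _ => rfl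

lemma rset_eq_of_eq [LinearOrder ι] (f : ι → ι → C) {A : Set ι} {b b' : ι}
    (h : ∀ a ∈ A, symCol f a b = symCol f a b') : rset f A b = rset f A b' := by
  ext m
  constructor
  · intro hm a ha; rw [← h a ha]; exact hm a ha
  · intro hm a ha; rw [h a ha]; exact hm a ha

/-- Trim a set to size at most `κ⁺`. -/
noncomputable def trim (κ : Cardinal.{v}) (s : Set ι) : Set ι :=
  if h : Order.succ κ ≤ #s then Classical.choose (Cardinal.le_mk_iff_exists_subset.1 h) else s

lemma trim_subset (κ : Cardinal.{v}) (s : Set ι) : trim κ s ⊆ s := by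
  rw [trim]
  split
  · exact (Classical.choose_spec (Cardinal.le_mk_iff_exists_subset.1 ‹_›)).1
  · exact subset_rfl

lemma trim_card (κ : Cardinal.{v}) (s : Set ι) : #(trim κ s) ≤ Order.succ κ := by
  rw [trim]
  split
  · exact le_of_eq (Classical.choose_spec (Cardinal.le_mk_iff_exists_subset.1 ‹_›)).2
  · exact (not_le.1 ‹¬ Order.succ κ ≤ #_›).le

lemma trim_get {κ : Cardinal.{v}} {s A : Set ι} {b : ι} (hb : b ∈ s) (hbP : b ∉ trim κ s)
    (hA : #A ≤ κ) : ∃ m ∈ trim κ s, m ∉ A := by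
  by_cases h : Order.succ κ ≤ #s
  · have he : trim κ s = Classical.choose (Cardinal.le_mk_iff_exists_subset.1 h) := dif_pos h
    have hcard : #(trim κ s) = Order.succ κ := by
      rw [he]
      exact (Classical.choose_spec (Cardinal.le_mk_iff_exists_subset.1 h)).2
    by_contra hno
    push_neg at hno
    have hsub : trim κ s ⊆ A := hno
    have : Order.succ κ ≤ κ := by
      rw [← hcard]
      exact (Cardinal.mk_le_mk_of_subset hsub).trans hA
    exact (Order.lt_succ κ).not_ge this
  · have he : trim κ s = s := dif_neg h
    rw [he] at hbP
    exact absurd hb hbP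

/-- One closure step. -/
noncomputable def stepSet (κ : Cardinal.{v}) [LinearOrder ι] (f : ι → ι → C) (S : Set ι) :
    Set ι :=
  S ∪ ⋃ (p : {A : Set ι // A ⊆ S ∧ #A ≤ κ}) (b : ι), trim κ (rset f p.1 b)

lemma subset_stepSet (κ : Cardinal.{v}) [LinearOrder ι] (f : ι → ι → C) (S : Set ι) :
    S ⊆ stepSet κ f S := Set.subset_union_left

lemma trim_subset_stepSet {κ : Cardinal.{v}} [LinearOrder ι] {f : ι → ι → C} {S A : Set ι}
    (hA : A ⊆ S ∧ #A ≤ κ) (b : ι) : trim κ (rset f A b) ⊆ stepSet κ f S := by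
  refine Set.subset_union_of_subset_right ?_ _
  intro m hm
  exact Set.mem_iUnion.2 ⟨⟨A, hA⟩, Set.mem_iUnion.2 ⟨b, hm⟩⟩

lemma mk_rset_range_le [LinearOrder ι] (f : ι → ι → C) (A : Set ι) :
    #(Set.range (rset f A)) ≤ #C ^ #A := by
  rw [Cardinal.power_def]
  refine Cardinal.mk_le_of_injective (f := fun t : ↥(Set.range (rset f A)) =>
    fun a : A => symCol f a.1 (Classical.choose t.2)) ?_
  rintro ⟨t1, ht1⟩ ⟨t2, ht2⟩ h
  have hb1 : rset f A (Classical.choose ht1) = t1 := Classical.choose_spec ht1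
  have hb2 : rset f A (Classical.choose ht2) = t2 := Classical.choose_spec ht2
  have : ∀ a ∈ A, symCol f a (Classical.choose ht1) = symCol f a (Classical.choose ht2) := by
    intro a ha
    exact congrFun h ⟨a, ha⟩
  have := rset_eq_of_eq f this
  simp only [Subtype.mk.injEq]
  rw [← hb1, ← hb2, this]

set_option maxHeartbeats 1000000 in
lemma stepSet_card {κ : Cardinal.{v}} (hκ : ℵ₀ ≤ κ) [LinearOrder ι] {C : Type v} [Finite C]
    (f : ι → ι → C) {S : Set ι} (hS : #S ≤ 2^κ) : #(stepSet κ f S) ≤ 2^κ := by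
  have h2κ : ℵ₀ ≤ (2:Cardinal.{v})^κ := hκ.trans (Cardinal.cantor κ).le
  have hsucc2 : Order.succ κ ≤ (2:Cardinal.{v})^κ := Order.succ_le_of_lt (Cardinal.cantor κ)
  have hC : #C ≤ κ := (Cardinal.lt_aleph0_of_finite C).le.trans hκ
  have hκ2κ : κ ≤ (2:Cardinal.{v})^κ := (Cardinal.cantor κ).le
  have hAfun : ∀ A : Set ι, #A ≤ κ → #(Set.range (rset f A)) ≤ 2^κ := by
    intro A hA
    refine (mk_rset_range_le f A).trans ?_
    calc #C ^ #A ≤ κ ^ #A := Cardinal.power_le_power_right hC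
      _ ≤ κ ^ κ := Cardinal.power_le_power_left (by exact (aleph0_pos.trans_le hκ).ne') hA
      _ = 2 ^ κ := Cardinal.power_self_eq hκ
  have hinner : ∀ p : {A : Set ι // A ⊆ S ∧ #A ≤ κ},
      #(⋃ (b : ι), trim κ (rset f p.1 b)) ≤ 2^κ := by
    intro p
    have he : (⋃ (b : ι), trim κ (rset f p.1 b)) =
        ⋃ t : ↥(Set.range (rset f p.1)), trim κ t.1 := by
      ext m
      simp only [Set.mem_iUnion]
      constructor
      · rintro ⟨b, hb⟩
        exact ⟨⟨rset f p.1 b, ⟨b, rfl⟩⟩, hb⟩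
      · rintro ⟨⟨t, b, rfl⟩, hm⟩
        exact ⟨b, hm⟩
    rw [he]
    refine Cardinal.mk_iUnion_le_sum_mk.trans ?_
    refine (Cardinal.sum_le_sum (fun t : ↥(Set.range (rset f p.1)) => #(trim κ t.1))
      (fun _ => Order.succ κ) (fun t => trim_card κ t.1)).trans ?_
    rw [Cardinal.sum_const']
    calc #(Set.range (rset f p.1)) * Order.succ κ ≤ (2^κ) * (2^κ) :=
          mul_le_mul' (hAfun p.1 p.2.2) hsucc2
      _ = 2^κ := Cardinal.mul_eq_self h2κ
  have hsubA : #{A : Set ι // A ⊆ S ∧ #A ≤ κ} ≤ 2^κ := by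
    refine (Cardinal.mk_bounded_subset_le S κ).trans ?_
    calc max #S ℵ₀ ^ κ ≤ ((2:Cardinal.{v})^κ) ^ κ :=
          Cardinal.power_le_power_right (max_le hS h2κ)
      _ = 2 ^ (κ * κ) := by rw [← Cardinal.power_mul]
      _ = 2 ^ κ := by rw [Cardinal.mul_eq_self hκ]
  refine (Cardinal.mk_union_le _ _).trans ?_
  have houter : #(⋃ (p : {A : Set ι // A ⊆ S ∧ #A ≤ κ}) (b : ι), trim κ (rset f p.1 b)) ≤ 2^κ := by
    refine Cardinal.mk_iUnion_le_sum_mk.trans ?_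
    refine (Cardinal.sum_le_sum _ (fun _ => 2^κ) hinner).trans ?_
    rw [Cardinal.sum_const']
    calc #{A : Set ι // A ⊆ S ∧ #A ≤ κ} * (2^κ) ≤ (2^κ) * (2^κ) := mul_le_mul' hsubA le_rfl
      _ = 2^κ := Cardinal.mul_eq_self h2κ
  calc #S + _ ≤ (2^κ) + (2^κ) := add_le_add hS houter
    _ = 2^κ := Cardinal.add_eq_self h2κ

/-- The tower of closure steps, of length `κ⁺`. -/
noncomputable def tower (κ : Cardinal.{v}) [LinearOrder ι] (f : ι → ι → C) :
    (Order.succ κ : Cardinal.{v}).ord.ToType → Set ι :=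
  (IsWellFounded.wf (r := ((· < ·) : (Order.succ κ : Cardinal.{v}).ord.ToType → (Order.succ κ : Cardinal.{v}).ord.ToType → Prop))).fix
    (fun i ih => stepSet κ f (⋃ j : Set.Iio i, ih j.1 j.2))

lemma tower_eq (κ : Cardinal.{v}) [LinearOrder ι] (f : ι → ι → C)
    (i : (Order.succ κ : Cardinal.{v}).ord.ToType) :
    tower κ f i = stepSet κ f (⋃ j : Set.Iio i, tower κ f j.1) := by
  rw [tower]
  exact WellFounded.fix_eq _ _ _

theorem erdosRadoGen {κ : Cardinal.{u}} (hκ : ℵ₀ ≤ κ) {ι : Type u} [LinearOrder ι]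
    [IsWellOrder ι (· < ·)]
    (hty : Ordinal.type ((· < ·) : ι → ι → Prop) = (Order.succ ((2:Cardinal.{u})^κ)).ord)
    {C : Type u} [Finite C] (f : ι → ι → C) :
    ∃ (c : C) (g : (Order.succ κ : Cardinal.{u}).ord.ToType → ι),
      StrictMono g ∧ ∀ a b, a < b → f (g a) (g b) = c := by
  classical
  haveI hwoJ : IsWellOrder (Order.succ κ : Cardinal.{u}).ord.ToType (· < ·) := isWellOrder_lt
  have h2κ : ℵ₀ ≤ (2:Cardinal.{u})^κ := hκ.trans (Cardinal.cantor κ).le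
  have hsucc2 : Order.succ κ ≤ (2:Cardinal.{u})^κ := Order.succ_le_of_lt (Cardinal.cantor κ)
  have hC : #C ≤ κ := (Cardinal.lt_aleph0_of_finite C).le.trans hκ
  have hcardι : #ι = Order.succ ((2:Cardinal.{u})^κ) := by
    rw [← Ordinal.card_type ((· < ·) : ι → ι → Prop), hty, Cardinal.card_ord]
  have hIio : ∀ i : ι, #(Set.Iio i) ≤ (2:Cardinal.{u})^κ := by
    intro i
    have h1 : Ordinal.typein ((· < ·) : ι → ι → Prop) i <
        (Order.succ ((2:Cardinal.{u})^κ)).ord := by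
      rw [← hty]; exact Ordinal.typein_lt_type _ i
    have h2 := Cardinal.lt_ord.1 h1
    have h3 : #{y // y < i} < Order.succ ((2:Cardinal.{u})^κ) := by
      exact h2
    exact Order.lt_succ_iff.1 h3
  have hIioJ : ∀ i : (Order.succ κ : Cardinal.{u}).ord.ToType, #(Set.Iio i) ≤ κ :=
    fun i => Order.lt_succ_iff.1 (Cardinal.mk_Iio_ord_toType i)
  -- cardinal bound on tower levels
  have tcard : ∀ i : (Order.succ κ : Cardinal.{u}).ord.ToType,
      #(tower κ f i) ≤ (2:Cardinal.{u})^κ := by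
    intro i
    refine WellFounded.induction
      (IsWellFounded.wf (r := ((· < ·) : (Order.succ κ : Cardinal.{u}).ord.ToType → (Order.succ κ : Cardinal.{u}).ord.ToType → Prop)))
      (C := fun i => #(tower κ f i) ≤ (2:Cardinal.{u})^κ) i ?_
    intro i ih
    rw [tower_eq]
    apply stepSet_card hκ
    refine Cardinal.mk_iUnion_le_sum_mk.trans ?_
    refine (Cardinal.sum_le_sum (fun j : ↥(Set.Iio i) => #(tower κ f j.1))
      (fun _ => 2^κ) (fun j => ih j.1 j.2)).trans ?_
    rw [Cardinal.sum_const']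
    calc #(Set.Iio i) * (2^κ) ≤ (2^κ) * (2^κ) :=
          mul_le_mul' ((hIioJ i).trans (Cardinal.cantor κ).le) le_rfl
      _ = 2^κ := Cardinal.mul_eq_self h2κ
  set Mset : Set ι := ⋃ i, tower κ f i with hMset
  have hMcard : #Mset ≤ (2:Cardinal.{u})^κ := by
    rw [hMset]
    refine Cardinal.mk_iUnion_le_sum_mk.trans ?_
    refine (Cardinal.sum_le_sum _ (fun _ => 2^κ) tcard).trans ?_
    rw [Cardinal.sum_const']
    rw [Cardinal.mk_ord_toType]
    calc Order.succ κ * (2^κ) ≤ (2^κ) * (2^κ) := mul_le_mul' hsucc2 le_rfl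
      _ = 2^κ := Cardinal.mul_eq_self h2κ
  -- bounded families in J
  have hbound : ∀ s : Set ((Order.succ κ : Cardinal.{u}).ord.ToType), #s ≤ κ →
      ∃ i, ∀ a ∈ s, a < i := by
    intro s hsk
    have h1 : #s < Ordinal.cof (Ordinal.type
        ((· < ·) : (Order.succ κ : Cardinal.{u}).ord.ToType → (Order.succ κ : Cardinal.{u}).ord.ToType → Prop)) := by
      rw [Ordinal.type_toType, (Cardinal.isRegular_succ hκ).cof_eq]
      exact hsk.trans_lt (Order.lt_succ κ)
    rw [Ordinal.cof_type] at h1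
    by_contra hno
    push_neg at hno
    exact (Order.cof_le hno).not_gt h1
  -- the closure property of Mset
  have Mclose : ∀ A : Set ι, A ⊆ Mset → #A ≤ κ → ∀ b, b ∉ Mset →
      ∃ m, m ∈ Mset ∧ m ∉ A ∧ ∀ a ∈ A, symCol f a m = symCol f a b := by
    intro A hAM hAκ b hbM
    obtain ⟨i, hi⟩ : ∃ i, A ⊆ ⋃ j : Set.Iio i, tower κ f j.1 := by
      have hch : ∀ a : A, ∃ i, a.1 ∈ tower κ f i := by
        intro a
        exact Set.mem_iUnion.1 (hAM a.2)
      choose st hst using hch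
      obtain ⟨i, hi⟩ := hbound (Set.range st) (Cardinal.mk_range_le.trans hAκ)
      refine ⟨i, fun a ha => ?_⟩
      exact Set.mem_iUnion.2 ⟨⟨st ⟨a, ha⟩, hi _ ⟨⟨a, ha⟩, rfl⟩⟩, hst ⟨a, ha⟩⟩
    have hsubM : trim κ (rset f A b) ⊆ Mset := by
      have h1 : trim κ (rset f A b) ⊆ stepSet κ f (⋃ j : Set.Iio i, tower κ f j.1) :=
        trim_subset_stepSet ⟨hi, hAκ⟩ b
      rw [← tower_eq] at h1
      exact h1.trans (Set.subset_iUnion (fun i => tower κ f i) i)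
    have hbtrim : b ∉ trim κ (rset f A b) := fun h => hbM (hsubM h)
    obtain ⟨m, hm1, hm2⟩ := trim_get (self_mem_rset f A b) hbtrim hAκ
    exact ⟨m, hsubM hm1, hm2, fun a ha => trim_subset κ _ hm1 a ha⟩
  -- a point outside Mset
  obtain ⟨b, hbM⟩ : ∃ b, b ∉ Mset := by
    by_contra hno
    push_neg at hno
    have he : Mset = Set.univ := Set.eq_univ_of_forall hno
    rw [he, Cardinal.mk_univ, hcardι] at hMcard
    exact (Order.lt_succ ((2:Cardinal.{u})^κ)).not_ge hMcard
  -- the κ⁺-sequence realizing the type of b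
  have ex2 : ∀ (η : (Order.succ κ : Cardinal.{u}).ord.ToType)
      (prev : ∀ ζ, ζ < η → ↥Mset), ∃ m : ↥Mset,
      ∀ ζ (h : ζ < η), m.1 ≠ (prev ζ h).1 ∧
        symCol f (prev ζ h).1 m.1 = symCol f (prev ζ h).1 b := by
    intro η prev
    set A : Set ι := Set.range (fun ζ : Set.Iio η => (prev ζ.1 ζ.2).1) with hA
    have hAM : A ⊆ Mset := by
      rintro _ ⟨ζ, rfl⟩
      exact (prev ζ.1 ζ.2).2
    have hAκ : #A ≤ κ := Cardinal.mk_range_le.trans (hIioJ η)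
    obtain ⟨m, hm1, hm2, hm3⟩ := Mclose A hAM hAκ b hbM
    refine ⟨⟨m, hm1⟩, fun ζ h => ⟨?_, hm3 _ ⟨⟨ζ, h⟩, rfl⟩⟩⟩
    intro he
    exact hm2 ⟨⟨ζ, h⟩, he.symm⟩
  have wfJ : WellFounded ((· < ·) : (Order.succ κ : Cardinal.{u}).ord.ToType → (Order.succ κ : Cardinal.{u}).ord.ToType → Prop) :=
    IsWellFounded.wf
  set aseq : (Order.succ κ : Cardinal.{u}).ord.ToType → ↥Mset :=
    wfJ.fix (fun η ih => Classical.choose (ex2 η ih)) with haseq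
  have aspec : ∀ η ζ, (h : ζ < η) → (aseq η).1 ≠ (aseq ζ).1 ∧
      symCol f (aseq ζ).1 (aseq η).1 = symCol f (aseq ζ).1 b := by
    intro η
    have hfix : aseq η = Classical.choose (ex2 η (fun ζ _ => aseq ζ)) := by
      rw [haseq]; exact wfJ.fix_eq _ η
    intro ζ h
    rw [hfix]
    exact Classical.choose_spec (ex2 η fun ζ _ => aseq ζ) ζ h
  have aneq : ∀ {ζ η}, ζ ≠ η → (aseq ζ).1 ≠ (aseq η).1 := by
    intro ζ η hne
    rcases lt_or_gt_of_ne hne with h | h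
    · exact fun e => (aspec η ζ h).1 e.symm
    · exact (aspec ζ η h).1
  -- find a large fiber
  obtain ⟨c, hcfib⟩ : ∃ c : C,
      Order.succ κ ≤ #((fun η => symCol f (aseq η).1 b) ⁻¹' {c}) := by
    by_contra hno
    push_neg at hno
    have hall : ∀ c : C, #((fun η => symCol f (aseq η).1 b) ⁻¹' {c}) ≤ κ :=
      fun c => Order.lt_succ_iff.1 (hno c)
    have huniv : (Set.univ : Set ((Order.succ κ : Cardinal.{u}).ord.ToType)) =
        ⋃ c : C, (fun η => symCol f (aseq η).1 b) ⁻¹' {c} := by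
      ext η
      simp [Set.mem_iUnion]
    have h1 : #(Set.univ : Set ((Order.succ κ : Cardinal.{u}).ord.ToType)) ≤ #C * κ := by
      rw [huniv]
      refine Cardinal.mk_iUnion_le_sum_mk.trans ?_
      refine (Cardinal.sum_le_sum _ (fun _ => κ) hall).trans ?_
      rw [Cardinal.sum_const']
    rw [Cardinal.mk_univ, Cardinal.mk_ord_toType] at h1
    have h2 : Order.succ κ ≤ κ := by
      refine h1.trans ?_
      calc #C * κ ≤ κ * κ := mul_le_mul' hC le_rfl
        _ = κ := Cardinal.mul_eq_self hκ
    exact (Order.lt_succ κ).not_ge h2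
  set fib := (fun η => symCol f (aseq η).1 b) ⁻¹' {c} with hfibdef
  set H : Set ι := Set.range (fun η : ↥fib => (aseq η.1).1) with hH
  have hφinj : Function.Injective (fun η : ↥fib => (aseq η.1).1) := by
    intro η η' he
    by_contra hne
    exact aneq (fun e => hne (Subtype.ext e)) he
  have hHcard : Order.succ κ ≤ #H := by
    rw [hH, Cardinal.mk_range_eq _ hφinj]
    exact hcfib
  have Hhom : ∀ u, u ∈ H → ∀ v, v ∈ H → u < v → f u v = c := by
    intro u hu v hv huv
    rw [hH] at hu hv
    obtain ⟨ζ, rfl⟩ := hu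
    obtain ⟨η, rfl⟩ := hv
    have hsym : symCol f (aseq ζ.1).1 (aseq η.1).1 = c := by
      rcases lt_trichotomy ζ.1 η.1 with h | h | h
      · rw [(aspec η.1 ζ.1 h).2]
        exact ζ.2
      · exact absurd (by rw [h] : (aseq ζ.1).1 = (aseq η.1).1) (ne_of_lt huv)
      · rw [symCol_comm, (aspec ζ.1 η.1 h).2]
        exact η.2
    rw [← symCol_of_lt f huv]
    exact hsym
  -- reorder: an initial segment of order type κ⁺ inside H
  haveI hwoH : IsWellOrder (↥H) (· < ·) := isWellOrder_lt
  have htype : (Order.succ κ : Cardinal.{u}).ord ≤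
      Ordinal.type ((· < ·) : ↥H → ↥H → Prop) := by
    rw [Cardinal.ord_le, Ordinal.card_type]
    exact hHcard
  obtain ⟨e⟩ : Nonempty (InitialSeg ((· < ·) : (Order.succ κ : Cardinal.{u}).ord.ToType → (Order.succ κ : Cardinal.{u}).ord.ToType → Prop) ((· < ·) : ↥H → ↥H → Prop)) := by
    rw [← Ordinal.type_le_iff, Ordinal.type_toType]
    exact htype
  refine ⟨c, fun j => (e j).1, ?_, ?_⟩
  · intro a b' hab
    exact Subtype.coe_lt_coe.2 (e.toRelEmbedding.map_rel_iff.2 hab)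
  · intro a b' hab
    exact Hhom _ (e a).2 _ (e b').2 (Subtype.coe_lt_coe.2 (e.toRelEmbedding.map_rel_iff.2 hab))

end Stmt16Aux
namespace Stmt16Aux

open Cardinal Set Ordinal

variable {X : Type u} [TopologicalSpace X]

lemma closure_compl_closure_subset {S : Set X} (hS : IsOpen S) :
    closure ((closure S)ᶜ) ⊆ Sᶜ :=
  closure_minimal (compl_subset_compl.mpr subset_closure) hS.isClosed_compl

/-- Erdős–Rado for pairs: `(2^κ)⁺ → (κ⁺)²_C` for finitely many colors. -/
theorem erdosRado {κ : Cardinal.{u}} (hκ : ℵ₀ ≤ κ) {C : Type u} [Finite C]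
    (f : (Order.succ ((2:Cardinal.{u})^κ)).ord.ToType → (Order.succ ((2:Cardinal.{u})^κ)).ord.ToType → C) :
    ∃ (c : C) (g : (Order.succ κ : Cardinal.{u}).ord.ToType → (Order.succ ((2:Cardinal.{u})^κ)).ord.ToType),
      StrictMono g ∧ ∀ a b, a < b → f (g a) (g b) = c := by
  haveI : IsWellOrder (Order.succ ((2:Cardinal.{u})^κ)).ord.ToType (· < ·) := isWellOrder_lt
  exact erdosRadoGen (ι := (Order.succ ((2:Cardinal.{u})^κ)).ord.ToType) hκ
    (Ordinal.type_toType ((Order.succ ((2:Cardinal.{u})^κ)).ord)) f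

/-- The data produced at each step of the main recursion. -/
structure Dat (q : ℕ) (x : X) : Type u where
  z : X
  hne : z ≠ x
  cx : Chart (3*q+2) x z
  cz : Chart (3*q+2) z x

theorem key (q : ℕ) (hS : SSpace (3*(q+1)) X) (κ : Cardinal.{u}) (hκ : ℵ₀ ≤ κ)
    (hs : ∀ D : Set X, SEvenDiscrete (q+1) D → #D ≤ κ) (x : X) :
    ∃ B : Set (Set X), #B ≤ 2^κ ∧ (∀ U ∈ B, SOpenNhd (q+1) x U) ∧
      (⋂ U ∈ B, closure U) = {x} := by
  classical
  by_contra hcon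
  push_neg at hcon
  have h2κ : ℵ₀ ≤ 2^κ := hκ.trans (Cardinal.cantor κ).le
  have hpick : ∀ B : Set (Set X), #B ≤ 2^κ → (∀ U ∈ B, SOpenNhd (q+1) x U) →
      ∃ z : X, z ≠ x ∧ ∀ U ∈ B, z ∈ closure U := by
    intro B hB hBnhd
    have hsub : {x} ⊆ ⋂ U ∈ B, closure U := by
      intro y hy
      simp only [Set.mem_singleton_iff] at hy; subst hy
      exact Set.mem_iInter₂.2 fun U hU => subset_closure (sOddNhd_mem (hBnhd U hU).2)
    obtain ⟨z, hz1, hz2⟩ := Set.exists_of_ssubset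
      (hsub.ssubset_of_ne (Ne.symm (hcon B hB hBnhd)))
    exact ⟨z, by simpa using hz2, fun U hU => Set.mem_iInter₂.1 hz1 U hU⟩
  -- the index type of the long sequence
  have ex : ∀ α : (Order.succ ((2:Cardinal.{u})^κ)).ord.ToType,
      ∀ prev : (β : (Order.succ ((2:Cardinal.{u})^κ)).ord.ToType) → β < α → Dat q x,
      ∃ p : Dat q x, ∀ β (h : β < α),
        p.z ∈ closure ((prev β h).cx.U (2*q+1)) ∧
        p.z ∈ closure ((closure ((prev β h).cz.U (2*q+2)))ᶜ) := by
    intro α prev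
    set B : Set (Set X) :=
      (Set.range fun β : Set.Iio α => (prev β.1 β.2).cx.U (2*q+1)) ∪
      (Set.range fun β : Set.Iio α => (closure ((prev β.1 β.2).cz.U (2*q+2)))ᶜ) with hB
    have h3 : #(Set.Iio α) ≤ 2^κ := Order.lt_succ_iff.1 (Cardinal.mk_Iio_ord_toType α)
    have hBcard : #B ≤ 2^κ := by
      refine (Cardinal.mk_union_le _ _).trans ?_
      calc #(Set.range fun β : Set.Iio α => (prev β.1 β.2).cx.U (2*q+1)) +
            #(Set.range fun β : Set.Iio α => (closure ((prev β.1 β.2).cz.U (2*q+2)))ᶜ)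
          ≤ (2^κ) + (2^κ) :=
            add_le_add (Cardinal.mk_range_le.trans h3) (Cardinal.mk_range_le.trans h3)
        _ = 2^κ := Cardinal.add_eq_self h2κ
    have hBnhd : ∀ U ∈ B, SOpenNhd (q+1) x U := by
      rintro U (⟨β, rfl⟩ | ⟨β, rfl⟩)
      · exact sOpenNhd_level _ (by omega) (by omega)
      · exact sOpenNhd_compl _
    obtain ⟨z, hzx, hz⟩ := hpick B hBcard hBnhd
    obtain ⟨cx⟩ := exists_chart (q := q) hS (Ne.symm hzx)
    obtain ⟨cz⟩ := exists_chart (q := q) hS hzx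
    refine ⟨⟨z, hzx, cx, cz⟩, fun β h => ⟨?_, ?_⟩⟩
    · exact hz _ (Set.mem_union_left _ ⟨⟨β, h⟩, rfl⟩)
    · exact hz _ (Set.mem_union_right _ ⟨⟨β, h⟩, rfl⟩)
  have wf : WellFounded ((· < ·) : (Order.succ ((2:Cardinal.{u})^κ)).ord.ToType →
      (Order.succ ((2:Cardinal.{u})^κ)).ord.ToType → Prop) := IsWellFounded.wf
  set seq : (Order.succ ((2:Cardinal.{u})^κ)).ord.ToType → Dat q x :=
    wf.fix (fun α ih => Classical.choose (ex α ih)) with hseq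
  have seqspec : ∀ α, ∀ β, (h : β < α) →
      (seq α).z ∈ closure ((seq β).cx.U (2*q+1)) ∧
      (seq α).z ∈ closure ((closure ((seq β).cz.U (2*q+2)))ᶜ) := by
    intro α
    have hfix : seq α = Classical.choose (ex α (fun β _ => seq β)) := by
      rw [hseq]; exact wf.fix_eq _ α
    intro β h
    rw [hfix]
    exact Classical.choose_spec (ex α fun β _ => seq β) β h
  have relA : ∀ {β α}, β < α → (seq α).z ∈ (seq β).cx.U (2*q+2) := by
    intro β α h
    exact (seq β).cx.closure_subset (by omega) (by omega) ((seqspec α β h).1)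
  have relB : ∀ {β α}, β < α → (seq α).z ∉ (seq β).cz.U (2*q+2) := by
    intro β α h hmem
    exact closure_compl_closure_subset ((seq β).cz.opn _ (by omega))
      ((seqspec α β h).2) hmem
  have relne : ∀ {β α}, β < α → (seq α).z ≠ (seq β).z := by
    intro β α h heq
    have h1 : (seq α).z ∈ closure ((seq β).cx.U (3*q+2)) :=
      subset_closure ((seq β).cx.mono le_rfl (by omega) (relA h))
    rw [heq] at h1
    exact (seq β).cx.avoid h1
  have seqinj : ∀ {β α}, β ≠ α → (seq α).z ≠ (seq β).z := by
    intro β α h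
    rcases lt_or_gt_of_ne h with h' | h'
    · exact relne h'
    · exact fun e => relne h' e.symm
  -- apply Erdős–Rado
  obtain ⟨c, g, gmono, ghom⟩ := erdosRado (κ := κ) hκ
    (C := ULift.{u} (Bool × Bool))
    (fun β α => ⟨(decide ((seq β).z ∈ (seq α).cx.U (2*q+2)),
                  decide ((seq β).z ∈ (seq α).cz.U (q+1)))⟩)
  obtain ⟨⟨c1, c2⟩⟩ := c
  have hom1 : ∀ {a b}, a < b →
      ((seq (g a)).z ∈ (seq (g b)).cx.U (2*q+2) ↔ c1 = true) := by
    intro a b h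
    have h1 : decide ((seq (g a)).z ∈ (seq (g b)).cx.U (2*q+2)) = c1 :=
      congrArg (fun t => t.down.1) (ghom a b h)
    rw [← h1, decide_eq_true_iff]
  have hom2 : ∀ {a b}, a < b →
      ((seq (g a)).z ∈ (seq (g b)).cz.U (q+1) ↔ c2 = true) := by
    intro a b h
    have h1 : decide ((seq (g a)).z ∈ (seq (g b)).cz.U (q+1)) = c2 :=
      congrArg (fun t => t.down.2) (ghom a b h)
    rw [← h1, decide_eq_true_iff]
  -- final contradiction machinery
  have hJcard : #((Order.succ κ : Cardinal.{u}).ord.ToType) = Order.succ κ := by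
    exact Cardinal.mk_ord_toType _
  have finish : ∀ pt : (Order.succ κ : Cardinal.{u}).ord.ToType → X, Function.Injective pt →
      (∀ j, ∃ U : Set X, SOpenNhd (q+1) (pt j) U ∧ closure U ∩ Set.range pt = {pt j}) →
      False := by
    intro pt hinj hw
    have hdisc : SEvenDiscrete (q+1) (Set.range pt) := by
      rintro p ⟨j, rfl⟩
      exact hw j
    have hcard := hs _ hdisc
    rw [Cardinal.mk_range_eq pt hinj, hJcard] at hcard
    exact (Order.lt_succ κ).not_ge hcard
  rcases Bool.eq_false_or_eq_true c2 with hc2 | hc2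
  · -- c1 = false, c2 = true : successor-position witnesses
    have wfJ : WellFounded ((· < ·) : (Order.succ κ : Cardinal.{u}).ord.ToType →
        (Order.succ κ : Cardinal.{u}).ord.ToType → Prop) := IsWellFounded.wf
    have exgt : ∀ j : (Order.succ κ : Cardinal.{u}).ord.ToType, {b | j < b}.Nonempty := by
      intro j
      by_contra hno
      rw [Set.not_nonempty_iff_eq_empty] at hno
      have hempty : ∀ b, ¬ j < b := by
        intro b hb
        have : b ∈ {b | j < b} := hb
        simp [hno] at this
      have huniv : (Set.univ : Set (Order.succ κ : Cardinal.{u}).ord.ToType) ⊆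
          insert j (Set.Iio j) := by
        intro b _
        rcases lt_trichotomy j b with h | h | h
        · exact absurd h (hempty b)
        · rw [← h]; exact Set.mem_insert _ _
        · exact Set.mem_insert_of_mem _ h
      have h1 : #(Set.univ : Set (Order.succ κ : Cardinal.{u}).ord.ToType) ≤ #(Set.Iio j) + 1 :=
        (Cardinal.mk_le_mk_of_subset huniv).trans Cardinal.mk_insert_le
      have h2 : #(Set.Iio j) ≤ κ := Order.lt_succ_iff.1 (Cardinal.mk_Iio_ord_toType j)
      rw [Cardinal.mk_univ, hJcard] at h1
      have h4 : Order.succ κ ≤ κ :=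
        h1.trans ((add_le_add_left h2 1).trans_eq (Cardinal.add_one_eq hκ))
      exact (Order.lt_succ κ).not_ge h4
    set nxt : (Order.succ κ : Cardinal.{u}).ord.ToType → (Order.succ κ : Cardinal.{u}).ord.ToType :=
      fun j => wfJ.min {b | j < b} (exgt j) with hnxt
    have nxt_gt : ∀ j, j < nxt j := fun j => wfJ.min_mem _ (exgt j)
    have nxt_le : ∀ {j b}, j < b → nxt j ≤ b := by
      intro j b h
      by_contra hlt
      push_neg at hlt
      exact wfJ.not_lt_min _ h hlt
    have nxt_inj : Function.Injective nxt := by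
      intro j j' h
      by_contra hne
      rcases lt_or_gt_of_ne hne with h' | h'
      · exact absurd ((nxt_le h').trans_lt (nxt_gt j')) (by rw [h]; exact lt_irrefl _)
      · exact absurd ((nxt_le h').trans_lt (nxt_gt j)) (by rw [h]; exact lt_irrefl _)
    refine finish (fun j => (seq (g (nxt j))).z) ?_ ?_
    · intro j j' h
      by_contra hne
      exact seqinj (fun e => hne (nxt_inj (gmono.injective e))) h.symm
    · intro j
      have hδη : g j < g (nxt j) := gmono (nxt_gt j)
      refine ⟨(seq (g (nxt j))).cz.U (2*q+1) ∩ (closure ((seq (g j)).cz.U (q+1)))ᶜ,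
        sOpenNhd_inter _ _ (relB hδη), ?_⟩
      have hcl : closure ((seq (g (nxt j))).cz.U (2*q+1) ∩
            (closure ((seq (g j)).cz.U (q+1)))ᶜ) ⊆
          (seq (g (nxt j))).cz.U (2*q+2) ∩ ((seq (g j)).cz.U (q+1))ᶜ := by
        refine (closure_inter_subset_inter_closure _ _).trans (Set.inter_subset_inter ?_ ?_)
        · exact (seq (g (nxt j))).cz.closure_subset (by omega) (by omega)
        · exact closure_compl_closure_subset ((seq (g j)).cz.opn _ (by omega))
      apply Set.Subset.antisymm
      · rintro y ⟨hy1, j', rfl⟩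
        by_contra hne
        have hne' : j' ≠ j := fun e => hne (by rw [e]; exact Set.mem_singleton _)
        rcases lt_or_gt_of_ne hne' with h' | h'
        · -- j' < j : earlier points are inside the δ-chart
          rcases lt_or_eq_of_le (nxt_le h') with h'' | h''
          · have hmem : (seq (g (nxt j'))).z ∈ (seq (g j)).cz.U (q+1) :=
              (hom2 h'').2 hc2
            exact (hcl hy1).2 hmem
          · have : (seq (g (nxt j'))).z ∈ (seq (g j)).cz.U (q+1) := by
              rw [h'']
              exact (seq (g j)).cz.mono (by omega) (by omega) (seq (g j)).cz.mem0
            exact (hcl hy1).2 this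
        · -- j < j' : later points avoid the η-chart
          have hηlt : g (nxt j) ≤ g j' := by
            rcases lt_or_eq_of_le (nxt_le h') with h'' | h''
            · exact (gmono h'').le
            · rw [h'']
          have : g (nxt j) < g (nxt j') := hηlt.trans_lt (gmono (nxt_gt j'))
          exact relB this (hcl hy1).1
      · rintro y (rfl : y = (seq (g (nxt j))).z)
        refine ⟨subset_closure ⟨(seq (g (nxt j))).cz.mem (by omega), fun hmem => ?_⟩, ⟨j, rfl⟩⟩
        exact relB hδη ((seq (g j)).cz.closure_subset (by omega) (by omega) hmem)
  · -- c1 = false, c2 = false : use low levels of the z-charts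
    refine finish (fun j => (seq (g j)).z) ?_ ?_
    · intro j j' h
      by_contra hne
      exact seqinj (fun e => hne (gmono.injective e)) h.symm
    · intro j
      refine ⟨(seq (g j)).cz.U q, sOpenNhd_level _ le_rfl (by omega), ?_⟩
      have hcl : closure ((seq (g j)).cz.U q) ⊆ (seq (g j)).cz.U (q+1) :=
        (seq (g j)).cz.closure_subset (by omega) (by omega)
      apply Set.Subset.antisymm
      · rintro y ⟨hy1, j', rfl⟩
        by_contra hne
        have hne' : j' ≠ j := fun e => hne (by rw [e]; exact Set.mem_singleton _)
        rcases lt_or_gt_of_ne hne' with h' | h'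
        · have : (seq (g j')).z ∈ (seq (g j)).cz.U (q+1) := hcl hy1
          rw [hom2 h', hc2] at this
          exact Bool.false_ne_true this
        · refine relB (gmono h') ((seq (g j)).cz.mono (by omega) (by omega) (hcl hy1))
      · rintro y (rfl : y = (seq (g j)).z)
        exact ⟨subset_closure ((seq (g j)).cz.mem (by omega)), ⟨j, rfl⟩⟩
end Stmt16Aux
namespace Stmt16Aux

open Cardinal Set Ordinal

variable {X : Type u} [TopologicalSpace X]

theorem main (k : ℕ) (hk : 1 ≤ k) (hS : SSpace (3*k) X) :
    psiEven k X ≤ 2 ^ spreadEven k X := by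
  obtain ⟨q, rfl⟩ : ∃ q, k = q + 1 := ⟨k - 1, by omega⟩
  set κ := spreadEven (q+1) X with hκdef
  have hκ : ℵ₀ ≤ κ := le_sup_right
  have hs : ∀ D : Set X, SEvenDiscrete (q+1) D → #D ≤ κ := by
    intro D hD
    have h1 : #D ≤ ⨆ D : {D : Set X // SEvenDiscrete (q+1) D}, #D.1 :=
      le_ciSup (Cardinal.bddAbove_range _)
        (⟨D, hD⟩ : {D : Set X // SEvenDiscrete (q+1) D})
    exact h1.trans le_sup_left
  have hS' : SSpace (3*(q+1)) X := hS
  have hkey := key q hS' κ hκ hs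
  apply csInf_le'
  exact ⟨hκ.trans (Cardinal.cantor κ).le, fun x => hkey x⟩

end Stmt16Aux

theorem stmt16 (k : ℕ) (hk : 1 ≤ k) (X : Type u) [TopologicalSpace X] :
    (SSpace (3 * k) X → psiEven k X ≤ 2 ^ spreadEven k X) ∧
    (SSpace 3 X → psiEven 1 X ≤ 2 ^ spreadEven 1 X) := by
  constructor
  · exact fun hS => Stmt16Aux.main k hk hS
  · intro h
    have h' : SSpace (3*1) X := by
      have e : 3*1 = 3 := by norm_num
      rw [e]; exact h
    exact Stmt16Aux.main 1 le_rfl h'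
end
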